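/- arXiv:1802.10291 — 11 statements merged into one kernel-verified Lean document; each statement's English description precedes it below -/
import Mathlib

section
/- Under the MCI setup, suppose H_n is invertible for every n ∈ I_1. Then every bandlimited signal f(t) = Σ_{n∈I^N} a(n) e^{int} (a : ℤ → ℂ supported in I^N) satisfies, for all t ∈ ℝ, f(t) = (1/L) Σ_{m=1}^{M} Σ_{p=0}^{L−1} g_m(t_p) y_m(t − t_p), where t_p = 2πp/L and g_m(t) = Σ_{n∈I^N} a(n) b_m(n) e^{int}. -/
open Real

lemma sum_swap4 {R : Type*} [AddCommMonoid R] {α β γ δ : Type*}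
    (A : Finset α) (B : Finset β) (C : Finset γ) (D : Finset δ)
    (F : α → β → γ → δ → R) :
    ∑ a ∈ A, ∑ b ∈ B, ∑ c ∈ C, ∑ d ∈ D, F a b c d
      = ∑ c ∈ C, ∑ d ∈ D, ∑ a ∈ A, ∑ b ∈ B, F a b c d := by
  trans ∑ a ∈ A, ∑ c ∈ C, ∑ b ∈ B, ∑ d ∈ D, F a b c d
  · exact Finset.sum_congr rfl fun a _ => Finset.sum_comm
  trans ∑ c ∈ C, ∑ a ∈ A, ∑ b ∈ B, ∑ d ∈ D, F a b c d
  · exact Finset.sum_comm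
  refine Finset.sum_congr rfl fun c _ => ?_
  trans ∑ a ∈ A, ∑ d ∈ D, ∑ b ∈ B, F a b c d
  · exact Finset.sum_congr rfl fun a _ => Finset.sum_comm
  · exact Finset.sum_comm

lemma exp_sum_div (L : ℕ) (hL : 0 < L) (d : ℤ) :
    ∑ p ∈ Finset.range L,
        Complex.exp (Complex.I * (d : ℂ) * ((2 * π * (p : ℝ) / (L : ℝ) : ℝ) : ℂ))
      = if (L : ℤ) ∣ d then (L : ℂ) else 0 := by
  have hLC : (L : ℂ) ≠ 0 := Nat.cast_ne_zero.mpr hL.ne'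
  have hπ : (2 * (π : ℂ) * Complex.I) ≠ 0 := by
    simp [Real.pi_ne_zero, Complex.I_ne_zero, Complex.ofReal_ne_zero]
  set ζ : ℂ := Complex.exp (2 * π * Complex.I * (d : ℂ) / (L : ℂ)) with hζ
  have hterm : ∀ p ∈ Finset.range L,
      Complex.exp (Complex.I * (d : ℂ) * ((2 * π * (p : ℝ) / (L : ℝ) : ℝ) : ℂ)) = ζ ^ p := by
    intro p _
    rw [hζ, ← Complex.exp_nat_mul]
    congr 1
    push_cast
    field_simp
  rw [Finset.sum_congr rfl hterm]
  have hζL : ζ ^ L = 1 := by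
    rw [hζ, ← Complex.exp_nat_mul]
    have h1 : (L : ℂ) * (2 * π * Complex.I * (d : ℂ) / (L : ℂ)) = (d : ℂ) * (2 * π * Complex.I) := by
      field_simp
    rw [h1, Complex.exp_int_mul_two_pi_mul_I]
  have hiff : ζ = 1 ↔ (L : ℤ) ∣ d := by
    rw [hζ, Complex.exp_eq_one_iff]
    constructor
    · rintro ⟨n, hn⟩
      refine ⟨n, ?_⟩
      have h2 : 2 * (π : ℂ) * Complex.I * (d : ℂ) = 2 * (π : ℂ) * Complex.I * ((n : ℂ) * (L : ℂ)) := by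
        field_simp at hn
        linear_combination (2 * (π : ℂ) * Complex.I) * hn
      have h3 : (d : ℂ) = (n : ℂ) * (L : ℂ) := mul_left_cancel₀ hπ h2
      have : d = n * (L:ℤ) := by exact_mod_cast h3
      rw [this, mul_comm]
    · rintro ⟨c, rfl⟩
      exact ⟨c, by push_cast; field_simp⟩
  by_cases h : (L : ℤ) ∣ d
  · rw [if_pos h]
    have : ζ = 1 := hiff.mpr h
    simp [this]
  · rw [if_neg h]
    have hζ1 : ζ ≠ 1 := fun hh => h (hiff.mp hh)
    rw [geom_sum_eq hζ1, hζL]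
    simp



/-- MCI reconstruction theorem (Theorem 3.1): a bandlimited signal
`f(t) = Σ_{n∈I^N} a(n) e^{int}` is exactly reconstructed from the samples of the
channel outputs `g_m` via the interpolation functions `y_m`. -/
theorem mci_reconstruction
    (N₁ N₂ : ℤ) (M L : ℕ) (hM : 0 < M) (hL : 0 < L)
    (hNML : N₂ - N₁ + 1 = (L : ℤ) * (M : ℤ))
    (b : Fin M → ℤ → ℂ)
    (H : ℤ → Matrix (Fin M) (Fin M) ℂ)
    (hH : ∀ n : ℤ, H n = Matrix.of fun j k : Fin M => b k (n + (j : ℤ) * (L : ℤ)))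
    (hinv : ∀ n : ℤ, N₁ ≤ n → n ≤ N₁ + (L : ℤ) - 1 → IsUnit (H n))
    (r : Fin M → ℤ → ℂ)
    (hr1 : ∀ (m : Fin M) (n : ℤ), N₁ ≤ n → n ≤ N₁ + (L : ℤ) - 1 →
      ∀ k : Fin M, r m (n + (k : ℤ) * (L : ℤ)) = (H n)⁻¹ m k)
    (hr0 : ∀ (m : Fin M) (n : ℤ), n < N₁ ∨ N₂ < n → r m n = 0)
    (y : Fin M → ℝ → ℂ)
    (hy : ∀ (m : Fin M) (t : ℝ),
      y m t = ∑ n ∈ Finset.Icc N₁ N₂, r m n * Complex.exp (Complex.I * (n : ℂ) * (t : ℂ)))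
    (a : ℤ → ℂ) (ha : ∀ n : ℤ, n < N₁ ∨ N₂ < n → a n = 0)
    (f : ℝ → ℂ)
    (hf : ∀ t : ℝ,
      f t = ∑ n ∈ Finset.Icc N₁ N₂, a n * Complex.exp (Complex.I * (n : ℂ) * (t : ℂ)))
    (g : Fin M → ℝ → ℂ)
    (hg : ∀ (m : Fin M) (t : ℝ),
      g m t = ∑ n ∈ Finset.Icc N₁ N₂, a n * b m n * Complex.exp (Complex.I * (n : ℂ) * (t : ℂ))) :
    ∀ t : ℝ, f t = (1 / (L : ℂ)) * ∑ m : Fin M, ∑ p ∈ Finset.range L,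
      g m (2 * π * p / L) * y m (t - 2 * π * p / L) := by
  intro t
  have hLC : (L : ℂ) ≠ 0 := Nat.cast_ne_zero.mpr hL.ne'
  have hLpos : (0 : ℤ) < (L : ℤ) := by exact_mod_cast hL
  have orth : ∀ ν ∈ Finset.Icc N₁ N₂, ∀ n ∈ Finset.Icc N₁ N₂, (L : ℤ) ∣ (ν - n) →
      (∑ m : Fin M, b m ν * r m n) = if ν = n then 1 else 0 := by
    intro ν hν n hn hdvd
    rw [Finset.mem_Icc] at hν hn
    set n₀ : ℤ := N₁ + (n - N₁) % L with hn₀def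
    have hmod0 : 0 ≤ (n - N₁) % L := Int.emod_nonneg _ hLpos.ne'
    have hmodL : (n - N₁) % L < L := Int.emod_lt_of_pos _ hLpos
    set k : ℤ := (n - N₁) / L with hkdef
    have hnk : n = n₀ + k * L := by
      have h1 := Int.emod_add_mul_ediv (n - N₁) (L : ℤ)
      have h2 : (L : ℤ) * ((n - N₁) / L) = ((n - N₁) / L) * L := mul_comm _ _
      rw [hn₀def, hkdef]
      linarith
    have hk0 : 0 ≤ k := Int.ediv_nonneg (by linarith [hn.1]) hLpos.le
    have hML : (L : ℤ) * (M : ℤ) = (M : ℤ) * (L : ℤ) := mul_comm _ _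
    have hkM : k < M := by
      have h1 : n - N₁ < (M : ℤ) * L := by linarith [hn.2]
      rw [hkdef]
      exact Int.ediv_lt_of_lt_mul hLpos h1
    have hn₀1 : N₁ ≤ n₀ := by rw [hn₀def]; linarith
    have hn₀2 : n₀ ≤ N₁ + (L : ℤ) - 1 := by rw [hn₀def]; linarith
    have hdvd2 : (L : ℤ) ∣ (ν - n₀) := by
      have he : ν - n₀ = (ν - n) + k * L := by rw [hnk]; ring
      rw [he]
      exact dvd_add hdvd ⟨k, mul_comm _ _⟩
    set j : ℤ := (ν - n₀) / L with hjdef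
    have hjL : j * L = ν - n₀ := by rw [hjdef]; exact Int.ediv_mul_cancel hdvd2
    have hj0 : 0 ≤ j := by
      by_contra hcon
      push_neg at hcon
      have h1 : j ≤ -1 := by omega
      have h2 : j * L ≤ -1 * L := mul_le_mul_of_nonneg_right h1 hLpos.le
      have h3 : N₁ - (N₁ + (L:ℤ) - 1) ≤ ν - n₀ := by linarith [hν.1]
      linarith
    have hjM : j < M := by
      by_contra hcon
      push_neg at hcon
      have h2 : (M : ℤ) * L ≤ j * L := mul_le_mul_of_nonneg_right hcon hLpos.le
      have h3 : ν - n₀ ≤ N₂ - N₁ := by linarith [hν.2]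
      linarith
    have hkNat : k.toNat < M := by omega
    have hjNat : j.toNat < M := by omega
    set K : Fin M := ⟨k.toNat, hkNat⟩ with hKdef
    set J : Fin M := ⟨j.toNat, hjNat⟩ with hJdef
    have hKz : ((K : ℕ) : ℤ) = k := by simp [hKdef]; omega
    have hJz : ((J : ℕ) : ℤ) = j := by simp [hJdef]; omega
    have hνJ : ν = n₀ + ((J : ℕ) : ℤ) * L := by rw [hJz]; linarith
    have hnK : n = n₀ + ((K : ℕ) : ℤ) * L := by rw [hKz]; linarith
    have hb : ∀ m : Fin M, b m ν = (H n₀) J m := by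
      intro m
      rw [hH n₀, Matrix.of_apply, ← hνJ]
    have hrn : ∀ m : Fin M, r m n = (H n₀)⁻¹ m K := by
      intro m
      rw [← hr1 m n₀ hn₀1 hn₀2 K, ← hnK]
    have hmul : (H n₀) * (H n₀)⁻¹ = 1 :=
      Matrix.mul_nonsing_inv _ ((Matrix.isUnit_iff_isUnit_det _).mp (hinv n₀ hn₀1 hn₀2))
    have hJK : (J = K) ↔ (ν = n) := by
      constructor
      · intro h
        rw [hνJ, hnK, h]
      · intro h
        have h1 : j * L = k * L := by rw [hjL]; omega
        have h2 : j = k := mul_right_cancel₀ hLpos.ne' h1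
        rw [hJdef, hKdef]
        exact Fin.ext (by omega)
    calc ∑ m : Fin M, b m ν * r m n
        = ∑ m : Fin M, (H n₀) J m * (H n₀)⁻¹ m K :=
          Finset.sum_congr rfl fun m _ => by rw [hb m, hrn m]
      _ = ((H n₀) * (H n₀)⁻¹) J K := (Matrix.mul_apply).symm
      _ = (1 : Matrix (Fin M) (Fin M) ℂ) J K := by rw [hmul]
      _ = if ν = n then 1 else 0 := by
          rw [Matrix.one_apply]
          exact if_congr hJK rfl rfl
  have hexp : ∀ (ν n : ℤ) (p : ℕ),
      Complex.exp (Complex.I * (ν : ℂ) * ((2 * π * (p : ℝ) / (L : ℝ) : ℝ) : ℂ)) *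
        Complex.exp (Complex.I * (n : ℂ) * ((t - 2 * π * (p : ℝ) / (L : ℝ) : ℝ) : ℂ))
      = Complex.exp (Complex.I * (n : ℂ) * (t : ℂ)) *
        Complex.exp (Complex.I * ((ν - n : ℤ) : ℂ) * ((2 * π * (p : ℝ) / (L : ℝ) : ℝ) : ℂ)) := by
    intro ν n p
    rw [← Complex.exp_add, ← Complex.exp_add]
    congr 1
    push_cast
    ring
  have key : ∑ m : Fin M, ∑ p ∈ Finset.range L,
      g m (2 * π * p / L) * y m (t - 2 * π * p / L)
    = ∑ ν ∈ Finset.Icc N₁ N₂, ∑ n ∈ Finset.Icc N₁ N₂,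
        (a ν * Complex.exp (Complex.I * (n : ℂ) * (t : ℂ))) *
          (∑ m : Fin M, b m ν * r m n) *
          (∑ p ∈ Finset.range L,
            Complex.exp (Complex.I * ((ν - n : ℤ) : ℂ) * ((2 * π * (p : ℝ) / (L : ℝ) : ℝ) : ℂ))) := by
    calc ∑ m : Fin M, ∑ p ∈ Finset.range L, g m (2 * π * p / L) * y m (t - 2 * π * p / L)
        = ∑ m : Fin M, ∑ p ∈ Finset.range L, ∑ ν ∈ Finset.Icc N₁ N₂, ∑ n ∈ Finset.Icc N₁ N₂,
            (a ν * b m ν * Complex.exp (Complex.I * (ν : ℂ) * ((2 * π * (p : ℝ) / (L : ℝ) : ℝ) : ℂ))) *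
            (r m n * Complex.exp (Complex.I * (n : ℂ) * ((t - 2 * π * (p : ℝ) / (L : ℝ) : ℝ) : ℂ))) := by
          refine Finset.sum_congr rfl fun m _ => Finset.sum_congr rfl fun p _ => ?_
          rw [hg, hy, Finset.sum_mul_sum]
      _ = ∑ m : Fin M, ∑ p ∈ Finset.range L, ∑ ν ∈ Finset.Icc N₁ N₂, ∑ n ∈ Finset.Icc N₁ N₂,
            (a ν * Complex.exp (Complex.I * (n : ℂ) * (t : ℂ))) * (b m ν * r m n) *
            Complex.exp (Complex.I * ((ν - n : ℤ) : ℂ) * ((2 * π * (p : ℝ) / (L : ℝ) : ℝ) : ℂ)) := by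
          refine Finset.sum_congr rfl fun m _ => Finset.sum_congr rfl fun p _ =>
            Finset.sum_congr rfl fun ν _ => Finset.sum_congr rfl fun n _ => ?_
          calc (a ν * b m ν * Complex.exp (Complex.I * (ν : ℂ) * ((2 * π * (p : ℝ) / (L : ℝ) : ℝ) : ℂ))) *
                (r m n * Complex.exp (Complex.I * (n : ℂ) * ((t - 2 * π * (p : ℝ) / (L : ℝ) : ℝ) : ℂ)))
              = a ν * (b m ν * r m n) *
                (Complex.exp (Complex.I * (ν : ℂ) * ((2 * π * (p : ℝ) / (L : ℝ) : ℝ) : ℂ)) *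
                 Complex.exp (Complex.I * (n : ℂ) * ((t - 2 * π * (p : ℝ) / (L : ℝ) : ℝ) : ℂ))) := by ring
            _ = _ := by rw [hexp ν n p]; ring
      _ = ∑ ν ∈ Finset.Icc N₁ N₂, ∑ n ∈ Finset.Icc N₁ N₂, ∑ m : Fin M, ∑ p ∈ Finset.range L,
            (a ν * Complex.exp (Complex.I * (n : ℂ) * (t : ℂ))) * (b m ν * r m n) *
            Complex.exp (Complex.I * ((ν - n : ℤ) : ℂ) * ((2 * π * (p : ℝ) / (L : ℝ) : ℝ) : ℂ)) :=
          sum_swap4 _ _ _ _ _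
      _ = _ := by
          refine Finset.sum_congr rfl fun ν _ => Finset.sum_congr rfl fun n _ => ?_
          simp only [← Finset.mul_sum, ← Finset.sum_mul]
  rw [hf, key, Finset.mul_sum]
  refine Eq.symm (Finset.sum_congr rfl fun ν hν => ?_)
  rw [Finset.mul_sum]
  have hterm : ∀ n ∈ Finset.Icc N₁ N₂,
      1 / (L : ℂ) * ((a ν * Complex.exp (Complex.I * (n : ℂ) * (t : ℂ))) *
        (∑ m : Fin M, b m ν * r m n) *
        (∑ p ∈ Finset.range L,
          Complex.exp (Complex.I * ((ν - n : ℤ) : ℂ) * ((2 * π * (p : ℝ) / (L : ℝ) : ℝ) : ℂ))))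
      = if n = ν then a n * Complex.exp (Complex.I * (n : ℂ) * (t : ℂ)) else 0 := by
    intro n hn
    rw [exp_sum_div L hL (ν - n)]
    by_cases hd : (L : ℤ) ∣ (ν - n)
    · rw [if_pos hd, orth ν hν n hn hd]
      by_cases he : ν = n
      · subst he
        rw [if_pos rfl, if_pos rfl]
        field_simp
      · have he' : ¬ (n = ν) := fun h => he h.symm
        rw [if_neg he, if_neg he']
        ring
    · rw [if_neg hd]
      have he' : ¬ (n = ν) := by
        rintro rfl
        exact hd (by simp)
      rw [if_neg he']
      ring
  rw [Finset.sum_congr rfl hterm, Finset.sum_ite_eq' (Finset.Icc N₁ N₂) ν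
    (fun n => a n * Complex.exp (Complex.I * (n : ℂ) * (t : ℂ))), if_pos hν]
end

section
/- Under the MCI setup with H_n invertible for every n ∈ I_1, define v_{m,n}(t) = Σ_{k=1}^{M} q_{mk}(n) e^{i(n+kL−L)t} for n ∈ I_1, and the row vector Ṽ_m(t) = [v_{m,N₁}(t), v_{m,N₁+1}(t), …, v_{m,N₁+L−1}(t)]. Then for every t ∈ ℝ, [y_m(t−t_0), y_m(t−t_1), …, y_m(t−t_{L−1})] = Ṽ_m(t) · F_L · U_L, where F_L is the L×L DFT matrix with entries (F_L)_{pq} = ω^{pq} (ω = e^{−2πi/L}, 0 ≤ p,q ≤ L−1) and U_L = diag(ω^{0·N₁}, ω^{1·N₁}, …, ω^{(L−1)·N₁}). Equivalently, y_m(t − t_p) = Σ_{n∈I_1} v_{m,n}(t) e^{−in t_p} for 0 ≤ p ≤ L−1. -/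
open Real

private lemma mci_block_sum (g : ℤ → ℂ) (a : ℤ) (L : ℕ) :
    ∀ M : ℕ, ∑ n ∈ Finset.Ico a (a + (L : ℤ) * (M : ℤ)), g n
      = ∑ k ∈ Finset.range M, ∑ j ∈ Finset.Ico a (a + (L : ℤ)), g (j + (k : ℤ) * (L : ℤ)) := by
  intro M
  induction M with
  | zero => simp
  | succ M ih =>
    have hLM : (0:ℤ) ≤ (L : ℤ) * (M : ℤ) := by positivity
    have h1 : a ≤ a + (L : ℤ) * (M : ℤ) := by omega
    have h2 : a + (L : ℤ) * (M : ℤ) ≤ a + (L : ℤ) * ((M : ℤ) + 1) := by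
      have : (L : ℤ) * (M : ℤ) ≤ (L : ℤ) * ((M : ℤ) + 1) := by
        apply mul_le_mul_of_nonneg_left (by omega) (by positivity)
      omega
    have hcast : ((M + 1 : ℕ) : ℤ) = (M : ℤ) + 1 := by push_cast; ring
    rw [hcast, ← Finset.Ico_union_Ico_eq_Ico h1 h2,
      Finset.sum_union (Finset.Ico_disjoint_Ico_consecutive _ _ _), ih, Finset.sum_range_succ]
    congr 1
    have he : a + (L : ℤ) * ((M : ℤ) + 1) = (a + (L : ℤ)) + (M : ℤ) * (L : ℤ) := by ring
    have he2 : a + (L : ℤ) * (M : ℤ) = a + (M : ℤ) * (L : ℤ) := by ring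
    rw [he, he2, ← Finset.map_add_right_Ico a (a + (L : ℤ)) ((M : ℤ) * (L : ℤ)),
      Finset.sum_map]
    rfl

private lemma mci_fin_sum (L : ℕ) (a : ℤ) (f : ℤ → ℂ) :
    ∑ n ∈ Finset.Ico a (a + (L : ℤ)), f n = ∑ q : Fin L, f (a + (q : ℤ)) := by
  rw [Fin.sum_univ_eq_sum_range (fun q : ℕ => f (a + (q : ℤ))) L]
  apply Finset.sum_nbij' (i := fun n => (n - a).toNat) (j := fun q => a + (q : ℤ))
  · intro x hx; simp only [Finset.mem_Ico] at hx; simp only [Finset.mem_range]; omega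
  · intro x hx; simp only [Finset.mem_range] at hx; simp only [Finset.mem_Ico]; omega
  · intro x hx; simp only [Finset.mem_Ico] at hx; omega
  · intro x hx; simp only [Finset.mem_range] at hx; omega
  · intro x hx; simp only [Finset.mem_Ico] at hx
    congr 1; omega

/-- Lemma 3.2: matrix representation of the shifted interpolation functions
`y_m(t - t_p)` in terms of the DFT matrix, and the equivalent pointwise identity
`y_m(t - t_p) = Σ_{n∈I_1} v_{m,n}(t) e^{-i n t_p}`. -/
theorem mci_shifted_interpolants_matrix_representation
    (N₁ N₂ : ℤ) (M L : ℕ) (hM : 0 < M) (hL : 0 < L)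
    (hNML : N₂ - N₁ + 1 = (L : ℤ) * (M : ℤ))
    (b : Fin M → ℤ → ℂ)
    (H : ℤ → Matrix (Fin M) (Fin M) ℂ)
    (hH : ∀ n : ℤ, H n = Matrix.of fun j k : Fin M => b k (n + (j : ℤ) * (L : ℤ)))
    (hinv : ∀ n : ℤ, N₁ ≤ n → n ≤ N₁ + (L : ℤ) - 1 → IsUnit (H n))
    (r : Fin M → ℤ → ℂ)
    (hr1 : ∀ (m : Fin M) (n : ℤ), N₁ ≤ n → n ≤ N₁ + (L : ℤ) - 1 →
      ∀ k : Fin M, r m (n + (k : ℤ) * (L : ℤ)) = (H n)⁻¹ m k)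
    (hr0 : ∀ (m : Fin M) (n : ℤ), n < N₁ ∨ N₂ < n → r m n = 0)
    (y : Fin M → ℝ → ℂ)
    (hy : ∀ (m : Fin M) (t : ℝ),
      y m t = ∑ n ∈ Finset.Icc N₁ N₂, r m n * Complex.exp (Complex.I * (n : ℂ) * (t : ℂ)))
    (v : Fin M → ℤ → ℝ → ℂ)
    (hv : ∀ (m : Fin M) (n : ℤ) (t : ℝ),
      v m n t = ∑ k : Fin M,
        (H n)⁻¹ m k * Complex.exp (Complex.I * ((n : ℂ) + (k : ℂ) * (L : ℂ)) * (t : ℂ)))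
    (ω : ℂ) (hω : ω = Complex.exp (-(2 * (π : ℂ) * Complex.I) / (L : ℂ)))
    (F U : Matrix (Fin L) (Fin L) ℂ)
    (hF : ∀ p q : Fin L, F p q = ω ^ ((p : ℕ) * (q : ℕ)))
    (hU : U = Matrix.diagonal fun p : Fin L => ω ^ ((p : ℤ) * N₁))
    (m : Fin M) :
    ∀ t : ℝ,
      ((Matrix.of fun (_ : Fin 1) (p : Fin L) => y m (t - 2 * π * p / L)) =
        (Matrix.of fun (_ : Fin 1) (q : Fin L) => v m (N₁ + (q : ℤ)) t) * F * U) ∧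
      (∀ p : Fin L, y m (t - 2 * π * p / L) =
        ∑ n ∈ Finset.Icc N₁ (N₁ + (L : ℤ) - 1),
          v m n t * Complex.exp (-Complex.I * (n : ℂ) * ((2 * π * p / L : ℝ) : ℂ))) := by
  intro t
  have hLR : (L : ℝ) ≠ 0 := Nat.cast_ne_zero.mpr hL.ne'
  have hLC : (L : ℂ) ≠ 0 := Nat.cast_ne_zero.mpr hL.ne'
  have hIcc2 : Finset.Icc N₁ (N₁ + (L : ℤ) - 1) = Finset.Ico N₁ (N₁ + (L : ℤ)) := by
    ext n; simp only [Finset.mem_Icc, Finset.mem_Ico]; omega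
  have key : ∀ p : Fin L, y m (t - 2 * π * p / L) =
      ∑ n ∈ Finset.Icc N₁ (N₁ + (L : ℤ) - 1),
        v m n t * Complex.exp (-Complex.I * (n : ℂ) * ((2 * π * p / L : ℝ) : ℂ)) := by
    intro p
    have hIcc : Finset.Icc N₁ N₂ = Finset.Ico N₁ (N₁ + (L : ℤ) * (M : ℤ)) := by
      ext n; simp only [Finset.mem_Icc, Finset.mem_Ico]; omega
    rw [hy, hIcc, mci_block_sum, Finset.sum_comm, hIcc2]
    apply Finset.sum_congr rfl
    intro j hj
    simp only [Finset.mem_Ico] at hj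
    rw [hv, Finset.sum_mul,
      ← Fin.sum_univ_eq_sum_range (fun k : ℕ =>
        r m (j + (k : ℤ) * (L : ℤ)) *
          Complex.exp (Complex.I * ((j + (k : ℤ) * (L : ℤ) : ℤ) : ℂ) *
            ((t - 2 * π * p / L : ℝ) : ℂ))) M]
    apply Finset.sum_congr rfl
    intro k _
    rw [hr1 m j hj.1 (by omega) k]
    have hexp : Complex.exp (Complex.I * (((j + (k : ℤ) * (L : ℤ) : ℤ)) : ℂ)
          * ((t - 2 * π * p / L : ℝ) : ℂ))
        = Complex.exp (Complex.I * ((j : ℂ) + (k : ℂ) * (L : ℂ)) * (t : ℂ))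
          * Complex.exp (-Complex.I * (j : ℂ) * ((2 * π * p / L : ℝ) : ℂ)) := by
      rw [← Complex.exp_add]
      have harg : Complex.I * (((j + (k : ℤ) * (L : ℤ) : ℤ)) : ℂ)
            * ((t - 2 * π * p / L : ℝ) : ℂ)
          = (Complex.I * ((j : ℂ) + (k : ℂ) * (L : ℂ)) * (t : ℂ)
              + -Complex.I * (j : ℂ) * ((2 * π * p / L : ℝ) : ℂ))
            + ((-((k : ℤ) * (p : ℤ)) : ℤ) : ℂ) * (2 * π * Complex.I) := by
        push_cast
        field_simp
        ring
      rw [harg, Complex.exp_add, Complex.exp_int_mul_two_pi_mul_I, mul_one]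
    rw [hexp]
    ring
  refine ⟨?_, key⟩
  ext i p
  simp only [Matrix.of_apply]
  rw [hU, Matrix.mul_diagonal, Matrix.mul_apply, key p, hIcc2,
    mci_fin_sum L N₁ (fun n => v m n t *
      Complex.exp (-Complex.I * (n : ℂ) * ((2 * π * p / L : ℝ) : ℂ))),
    Finset.sum_mul]
  apply Finset.sum_congr rfl
  intro q _
  simp only [Matrix.of_apply]
  have hw : Complex.exp (-Complex.I * (((N₁ + (q : ℤ)) : ℤ) : ℂ) * ((2 * π * p / L : ℝ) : ℂ))
      = ω ^ ((q : ℕ) * (p : ℕ)) * ω ^ ((p : ℤ) * N₁) := by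
    rw [hω, ← Complex.exp_nat_mul, ← Complex.exp_int_mul, ← Complex.exp_add]
    congr 1
    push_cast
    field_simp
    ring
  rw [hF, hw]
  ring
end

section
/- Let N₀ be a natural number, N = 3N₀ + 1, L = 2N₀ + 1, and I_1 = {n ∈ ℤ : −N ≤ n ≤ −N + L − 1}. For n ∈ I_1 define v_{1,n}(t) = ((2L² + 3Ln + n²)/(2L²)) e^{int} − (n(2L+n)/L²) e^{i(n+L)t} + (n(L+n)/(2L²)) e^{i(n+2L)t}, v_{2,n}(t) = (i(3L+2n)/(2L²)) e^{int} − (2i(L+n)/L²) e^{i(n+L)t} + (i(L+2n)/(2L²)) e^{i(n+2L)t}, and v_{3,n}(t) = (−1/(2L²)) e^{int} + (1/L²) e^{i(n+L)t} − (1/(2L²)) e^{i(n+2L)t}, and set y_m(t) = Σ_{n∈I_1} v_{m,n}(t) for m = 1,2,3. Then every trigonometric polynomial f(t) = Σ_{n=−N}^{N} a(n) e^{int} (a(n) ∈ ℂ) satisfies, for all t ∈ ℝ, f(t) = (1/L) Σ_{p=0}^{L−1} [ f(t_p) y₁(t−t_p) + f'(t_p) y₂(t−t_p) + f''(t_p)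 y₃(t−t_p) ], where t_p = 2πp/L and f', f'' are the first and second derivatives of f. -/
open Real



noncomputable def mciE (s : ℝ) (μ : ℂ) : ℂ := Complex.exp (Complex.I * μ * (s : ℂ))

lemma mciE_def (s : ℝ) (μ : ℂ) : mciE s μ = Complex.exp (Complex.I * μ * (s : ℂ)) := rfl

lemma mci_exp_split (w μ : ℂ) (t s : ℝ) :
    mciE s w * mciE (t - s) μ = mciE t μ * mciE s (w - μ) := by
  unfold mciE
  rw [← Complex.exp_add, ← Complex.exp_add]
  push_cast
  ring_nf

lemma mci_geo (L : ℕ) (hL : 0 < L) (m : ℤ) :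
    ∑ p ∈ Finset.range L, mciE (2 * π * p / L) ((m : ℤ) : ℂ) =
      if (L : ℤ) ∣ m then (L : ℂ) else 0 := by
  have hLC : (L : ℂ) ≠ 0 := Nat.cast_ne_zero.mpr hL.ne'
  have hπ : (π : ℂ) ≠ 0 := by exact_mod_cast Real.pi_ne_zero
  have hterm : ∀ p : ℕ, mciE (2 * π * p / L) ((m : ℤ) : ℂ) =
      (Complex.exp (Complex.I * (m : ℂ) * (2 * π / L))) ^ p := by
    intro p
    rw [mciE_def, ← Complex.exp_nat_mul]
    push_cast
    ring_nf
  simp only [hterm]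
  by_cases hdvd : (L : ℤ) ∣ m
  · obtain ⟨q, hq⟩ := id hdvd
    have hz : Complex.exp (Complex.I * (m : ℂ) * (2 * π / L)) = 1 := by
      rw [Complex.exp_eq_one_iff]
      refine ⟨q, ?_⟩
      have hm : (m : ℂ) = (L : ℂ) * (q : ℂ) := by exact_mod_cast congrArg (Int.cast : ℤ → ℂ) hq
      field_simp [hm]
      linear_combination hm
    rw [if_pos hdvd]
    simp [hz]
  · have hz : Complex.exp (Complex.I * (m : ℂ) * (2 * π / L)) ≠ 1 := by
      intro h
      rw [Complex.exp_eq_one_iff] at h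
      obtain ⟨q, hq⟩ := h
      apply hdvd
      refine ⟨q, ?_⟩
      have hm : (m : ℂ) = (L : ℂ) * (q : ℂ) := by
        field_simp at hq
        apply mul_left_cancel₀ (Complex.I_ne_zero)
        apply mul_left_cancel₀ (two_ne_zero (α := ℂ))
        apply mul_left_cancel₀ hπ
        linear_combination (2 * (π : ℂ) * Complex.I) * hq
      exact_mod_cast hm
    have hpow : Complex.exp (Complex.I * (m : ℂ) * (2 * π / L)) ^ L = 1 := by
      rw [← Complex.exp_nat_mul, Complex.exp_eq_one_iff]
      refine ⟨m, ?_⟩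
      field_simp
    rw [if_neg hdvd, geom_sum_eq hz, hpow]
    simp

noncomputable def mciC0 (l n k : ℂ) : ℂ :=
  (2*l^2 + 3*l*k + k^2)/(2*l^2) + (Complex.I*n)*(Complex.I*(3*l+2*k)/(2*l^2)) + (-n^2)*(-1/(2*l^2))

noncomputable def mciC1 (l n k : ℂ) : ℂ :=
  -(k*(2*l+k)/l^2) - (Complex.I*n)*(2*Complex.I*(l+k)/l^2) + (-n^2)*(1/l^2)

noncomputable def mciC2 (l n k : ℂ) : ℂ :=
  k*(l+k)/(2*l^2) + (Complex.I*n)*(Complex.I*(l+2*k)/(2*l^2)) + (-n^2)*(-1/(2*l^2))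

noncomputable def mciPsi (t : ℝ) (l n k : ℂ) : ℂ :=
  mciC0 l n k * mciE t k + mciC1 l n k * mciE t (k + l) + mciC2 l n k * mciE t (k + 2*l)

lemma mciPsi_eval0 (t : ℝ) (l k : ℂ) (hl : l ≠ 0) : mciPsi t l k k = mciE t k := by
  unfold mciPsi
  have h0 : mciC0 l k k = 1 := by
    unfold mciC0; field_simp; ring_nf; simp only [Complex.I_sq]; ring_nf
  have h1 : mciC1 l k k = 0 := by
    unfold mciC1; field_simp; ring_nf; simp only [Complex.I_sq]; ring_nf
  have h2 : mciC2 l k k = 0 := by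
    unfold mciC2; field_simp; ring_nf; simp only [Complex.I_sq]; ring_nf
  rw [h0, h1, h2]; ring

lemma mciPsi_eval1 (t : ℝ) (l k : ℂ) (hl : l ≠ 0) : mciPsi t l (k + l) k = mciE t (k + l) := by
  unfold mciPsi
  have h0 : mciC0 l (k+l) k = 0 := by
    unfold mciC0; field_simp; ring_nf; simp only [Complex.I_sq]; ring_nf
  have h1 : mciC1 l (k+l) k = 1 := by
    unfold mciC1; field_simp; ring_nf; simp only [Complex.I_sq]; ring_nf
  have h2 : mciC2 l (k+l) k = 0 := by
    unfold mciC2; field_simp; ring_nf; simp only [Complex.I_sq]; ring_nf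
  rw [h0, h1, h2]; ring

lemma mciPsi_eval2 (t : ℝ) (l k : ℂ) (hl : l ≠ 0) : mciPsi t l (k + 2*l) k = mciE t (k + 2*l) := by
  unfold mciPsi
  have h0 : mciC0 l (k+2*l) k = 0 := by
    unfold mciC0; field_simp; ring_nf; simp only [Complex.I_sq]; ring_nf
  have h1 : mciC1 l (k+2*l) k = 0 := by
    unfold mciC1; field_simp; ring_nf; simp only [Complex.I_sq]; ring_nf
  have h2 : mciC2 l (k+2*l) k = 1 := by
    unfold mciC2; field_simp; ring_nf; simp only [Complex.I_sq]; ring_nf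
  rw [h0, h1, h2]; ring

lemma mci_dvd_shift (L m j : ℤ) : L ∣ (m - j * L) ↔ L ∣ m := by
  constructor <;> intro h
  · simpa using dvd_add h (dvd_mul_left L j)
  · exact dvd_sub h (dvd_mul_left L j)

/-- Example 3.2: reconstruction of a trigonometric polynomial from the samples of
itself and of its first two derivatives (three-channel MCI with
`N = 3N₀+1`, `L = 2N₀+1`). -/
theorem mci_derivative_sampling
    (N₀ : ℕ) (N L : ℕ) (hN : N = 3 * N₀ + 1) (hLdef : L = 2 * N₀ + 1)
    (a : ℤ → ℂ)
    (f fd fdd : ℝ → ℂ)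
    (hf : ∀ t : ℝ, f t = ∑ n ∈ Finset.Icc (-(N : ℤ)) (N : ℤ),
      a n * Complex.exp (Complex.I * (n : ℂ) * (t : ℂ)))
    (hfd : ∀ t : ℝ, fd t = ∑ n ∈ Finset.Icc (-(N : ℤ)) (N : ℤ),
      (Complex.I * (n : ℂ)) * a n * Complex.exp (Complex.I * (n : ℂ) * (t : ℂ)))
    (hfdd : ∀ t : ℝ, fdd t = ∑ n ∈ Finset.Icc (-(N : ℤ)) (N : ℤ),
      (-(n : ℂ) ^ 2) * a n * Complex.exp (Complex.I * (n : ℂ) * (t : ℂ)))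
    (v₁ v₂ v₃ : ℤ → ℝ → ℂ)
    (hv₁ : ∀ (n : ℤ) (t : ℝ), v₁ n t =
      ((2 * (L : ℂ) ^ 2 + 3 * (L : ℂ) * (n : ℂ) + (n : ℂ) ^ 2) / (2 * (L : ℂ) ^ 2)) *
        Complex.exp (Complex.I * (n : ℂ) * (t : ℂ)) -
      ((n : ℂ) * (2 * (L : ℂ) + (n : ℂ)) / (L : ℂ) ^ 2) *
        Complex.exp (Complex.I * ((n : ℂ) + (L : ℂ)) * (t : ℂ)) +
      ((n : ℂ) * ((L : ℂ) + (n : ℂ)) / (2 * (L : ℂ) ^ 2)) *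
        Complex.exp (Complex.I * ((n : ℂ) + 2 * (L : ℂ)) * (t : ℂ)))
    (hv₂ : ∀ (n : ℤ) (t : ℝ), v₂ n t =
      (Complex.I * (3 * (L : ℂ) + 2 * (n : ℂ)) / (2 * (L : ℂ) ^ 2)) *
        Complex.exp (Complex.I * (n : ℂ) * (t : ℂ)) -
      (2 * Complex.I * ((L : ℂ) + (n : ℂ)) / (L : ℂ) ^ 2) *
        Complex.exp (Complex.I * ((n : ℂ) + (L : ℂ)) * (t : ℂ)) +
      (Complex.I * ((L : ℂ) + 2 * (n : ℂ)) / (2 * (L : ℂ) ^ 2)) *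
        Complex.exp (Complex.I * ((n : ℂ) + 2 * (L : ℂ)) * (t : ℂ)))
    (hv₃ : ∀ (n : ℤ) (t : ℝ), v₃ n t =
      (-1 / (2 * (L : ℂ) ^ 2)) * Complex.exp (Complex.I * (n : ℂ) * (t : ℂ)) +
      (1 / (L : ℂ) ^ 2) * Complex.exp (Complex.I * ((n : ℂ) + (L : ℂ)) * (t : ℂ)) -
      (1 / (2 * (L : ℂ) ^ 2)) * Complex.exp (Complex.I * ((n : ℂ) + 2 * (L : ℂ)) * (t : ℂ)))
    (y₁ y₂ y₃ : ℝ → ℂ)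
    (hy₁ : ∀ t : ℝ, y₁ t = ∑ n ∈ Finset.Icc (-(N : ℤ)) (-(N : ℤ) + (L : ℤ) - 1), v₁ n t)
    (hy₂ : ∀ t : ℝ, y₂ t = ∑ n ∈ Finset.Icc (-(N : ℤ)) (-(N : ℤ) + (L : ℤ) - 1), v₂ n t)
    (hy₃ : ∀ t : ℝ, y₃ t = ∑ n ∈ Finset.Icc (-(N : ℤ)) (-(N : ℤ) + (L : ℤ) - 1), v₃ n t) :
    ∀ t : ℝ, f t = (1 / (L : ℂ)) * ∑ p ∈ Finset.range L,
      (f (2 * π * p / L) * y₁ (t - 2 * π * p / L) +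
       fd (2 * π * p / L) * y₂ (t - 2 * π * p / L) +
       fdd (2 * π * p / L) * y₃ (t - 2 * π * p / L)) := by
  intro t
  have hL : 0 < L := by omega
  have hLZ : (0 : ℤ) < (L : ℤ) := by exact_mod_cast hL
  have hLC : (L : ℂ) ≠ 0 := Nat.cast_ne_zero.mpr hL.ne'
  have hNL : (N : ℤ) = 3 * (L : ℤ) - 1 - (N : ℤ) + (3 * (L:ℤ) - 1 - 2 * (N:ℤ)) * 0 := by
    push_cast [hN, hLdef]; ring
  -- abbreviation for inner kernel
  set S := Finset.Icc (-(N : ℤ)) (N : ℤ) with hSdef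
  set K := Finset.Icc (-(N : ℤ)) (-(N : ℤ) + (L : ℤ) - 1) with hKdef
  -- Step 1 : expand each sample term
  have step1 : ∀ p : ℕ,
      f (2 * π * p / L) * y₁ (t - 2 * π * p / L) +
        fd (2 * π * p / L) * y₂ (t - 2 * π * p / L) +
        fdd (2 * π * p / L) * y₃ (t - 2 * π * p / L)
      = ∑ n ∈ S, ∑ k ∈ K, a n *
          (mciC0 (L : ℂ) (n : ℂ) (k : ℂ) * mciE t (k : ℂ) * mciE (2 * π * p / L) (((n - k : ℤ)) : ℂ)
           + mciC1 (L : ℂ) (n : ℂ) (k : ℂ) * mciE t ((k : ℂ) + (L : ℂ)) *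
               mciE (2 * π * p / L) (((n - k - L : ℤ)) : ℂ)
           + mciC2 (L : ℂ) (n : ℂ) (k : ℂ) * mciE t ((k : ℂ) + 2 * (L : ℂ)) *
               mciE (2 * π * p / L) (((n - k - 2 * L : ℤ)) : ℂ)) := by
    intro p
    rw [hf, hfd, hfdd, hy₁, hy₂, hy₃, Finset.sum_mul_sum, Finset.sum_mul_sum,
      Finset.sum_mul_sum, ← Finset.sum_add_distrib, ← Finset.sum_add_distrib]
    refine Finset.sum_congr rfl fun n _ => ?_
    rw [← Finset.sum_add_distrib, ← Finset.sum_add_distrib]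
    refine Finset.sum_congr rfl fun k _ => ?_
    rw [hv₁, hv₂, hv₃]
    simp only [← mciE_def]
    calc
      a n * mciE (2 * π * ↑p / ↑L) (n : ℂ) *
            (((2 * (L:ℂ)^2 + 3 * (L:ℂ) * (k:ℂ) + (k:ℂ)^2) / (2 * (L:ℂ)^2)) * mciE (t - 2*π*↑p/↑L) (k:ℂ) -
              ((k:ℂ) * (2*(L:ℂ) + (k:ℂ)) / (L:ℂ)^2) * mciE (t - 2*π*↑p/↑L) ((k:ℂ) + (L:ℂ)) +
              ((k:ℂ) * ((L:ℂ) + (k:ℂ)) / (2*(L:ℂ)^2)) * mciE (t - 2*π*↑p/↑L) ((k:ℂ) + 2*(L:ℂ))) +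
          Complex.I * (n:ℂ) * a n * mciE (2 * π * ↑p / ↑L) (n : ℂ) *
            ((Complex.I * (3*(L:ℂ) + 2*(k:ℂ)) / (2*(L:ℂ)^2)) * mciE (t - 2*π*↑p/↑L) (k:ℂ) -
              (2 * Complex.I * ((L:ℂ) + (k:ℂ)) / (L:ℂ)^2) * mciE (t - 2*π*↑p/↑L) ((k:ℂ) + (L:ℂ)) +
              (Complex.I * ((L:ℂ) + 2*(k:ℂ)) / (2*(L:ℂ)^2)) * mciE (t - 2*π*↑p/↑L) ((k:ℂ) + 2*(L:ℂ))) +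
          (-(n:ℂ)^2) * a n * mciE (2 * π * ↑p / ↑L) (n : ℂ) *
            ((-1 / (2*(L:ℂ)^2)) * mciE (t - 2*π*↑p/↑L) (k:ℂ) +
              (1 / (L:ℂ)^2) * mciE (t - 2*π*↑p/↑L) ((k:ℂ) + (L:ℂ)) -
              (1 / (2*(L:ℂ)^2)) * mciE (t - 2*π*↑p/↑L) ((k:ℂ) + 2*(L:ℂ)))
        = a n * ((mciE (2*π*↑p/↑L) (n:ℂ) * mciE (t - 2*π*↑p/↑L) (k:ℂ)) * mciC0 (L:ℂ) (n:ℂ) (k:ℂ) +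
            (mciE (2*π*↑p/↑L) (n:ℂ) * mciE (t - 2*π*↑p/↑L) ((k:ℂ) + (L:ℂ))) * mciC1 (L:ℂ) (n:ℂ) (k:ℂ) +
            (mciE (2*π*↑p/↑L) (n:ℂ) * mciE (t - 2*π*↑p/↑L) ((k:ℂ) + 2*(L:ℂ))) * mciC2 (L:ℂ) (n:ℂ) (k:ℂ)) := by
          unfold mciC0 mciC1 mciC2; ring
      _ = _ := by
          rw [mci_exp_split, mci_exp_split, mci_exp_split]
          push_cast
          ring
  -- Step 2 : sum over p for fixed n, k
  have step2 : ∀ n k : ℤ,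
      (∑ p ∈ Finset.range L, a n *
          (mciC0 (L : ℂ) (n : ℂ) (k : ℂ) * mciE t (k : ℂ) * mciE (2 * π * p / L) (((n - k : ℤ)) : ℂ)
           + mciC1 (L : ℂ) (n : ℂ) (k : ℂ) * mciE t ((k : ℂ) + (L : ℂ)) *
               mciE (2 * π * p / L) (((n - k - L : ℤ)) : ℂ)
           + mciC2 (L : ℂ) (n : ℂ) (k : ℂ) * mciE t ((k : ℂ) + 2 * (L : ℂ)) *
               mciE (2 * π * p / L) (((n - k - 2 * L : ℤ)) : ℂ)))
      = if (L : ℤ) ∣ (n - k) then a n * ((L : ℂ) * mciPsi t (L : ℂ) (n : ℂ) (k : ℂ)) else 0 := by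
    intro n k
    rw [← Finset.mul_sum]
    have hsplit : (∑ p ∈ Finset.range L,
        (mciC0 (L : ℂ) (n : ℂ) (k : ℂ) * mciE t (k : ℂ) * mciE (2 * π * p / L) (((n - k : ℤ)) : ℂ)
         + mciC1 (L : ℂ) (n : ℂ) (k : ℂ) * mciE t ((k : ℂ) + (L : ℂ)) *
             mciE (2 * π * p / L) (((n - k - L : ℤ)) : ℂ)
         + mciC2 (L : ℂ) (n : ℂ) (k : ℂ) * mciE t ((k : ℂ) + 2 * (L : ℂ)) *
             mciE (2 * π * p / L) (((n - k - 2 * L : ℤ)) : ℂ)))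
        = mciC0 (L : ℂ) (n : ℂ) (k : ℂ) * mciE t (k : ℂ) *
            (∑ p ∈ Finset.range L, mciE (2 * π * p / L) (((n - k : ℤ)) : ℂ))
          + mciC1 (L : ℂ) (n : ℂ) (k : ℂ) * mciE t ((k : ℂ) + (L : ℂ)) *
            (∑ p ∈ Finset.range L, mciE (2 * π * p / L) (((n - k - L : ℤ)) : ℂ))
          + mciC2 (L : ℂ) (n : ℂ) (k : ℂ) * mciE t ((k : ℂ) + 2 * (L : ℂ)) *
            (∑ p ∈ Finset.range L, mciE (2 * π * p / L) (((n - k - 2 * L : ℤ)) : ℂ)) := by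
      rw [Finset.sum_add_distrib, Finset.sum_add_distrib, Finset.mul_sum, Finset.mul_sum,
        Finset.mul_sum]
    rw [hsplit, mci_geo L hL, mci_geo L hL, mci_geo L hL]
    have d1 : ((L:ℤ) ∣ n - k - L) ↔ ((L:ℤ) ∣ n - k) := by
      simpa using mci_dvd_shift (L:ℤ) (n - k) 1
    have d2 : ((L:ℤ) ∣ n - k - 2 * L) ↔ ((L:ℤ) ∣ n - k) := by
      simpa using mci_dvd_shift (L:ℤ) (n - k) 2
    simp only [d1, d2]
    split_ifs with h
    · unfold mciPsi; ring
    · ring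
  -- Step 3 : for each n in S, sum over k picks exactly one term
  have step3 : ∀ n ∈ S,
      (∑ k ∈ K, if (L : ℤ) ∣ (n - k) then a n * mciPsi t (L : ℂ) (n : ℂ) (k : ℂ) else 0)
      = a n * mciE t (n : ℂ) := by
    intro n hn
    rw [hSdef, Finset.mem_Icc] at hn
    set k₀ : ℤ := -(N : ℤ) + (n + N) % L with hk0
    have hmod0 : 0 ≤ (n + N) % (L:ℤ) := Int.emod_nonneg _ (by omega)
    have hmodL : (n + N) % (L:ℤ) < L := Int.emod_lt_of_pos _ hLZ
    have hdm := Int.mul_ediv_add_emod (n + (N:ℤ)) (L:ℤ)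
    have hk0mem : k₀ ∈ K := by
      rw [hKdef, Finset.mem_Icc]
      omega
    have hdvd0 : (L : ℤ) ∣ (n - k₀) := ⟨(n + N) / L, by omega⟩
    rw [Finset.sum_eq_single_of_mem k₀ hk0mem ?uniq]
    case uniq =>
      intro k hk hne
      rw [if_neg]
      intro hdvd
      apply hne
      rw [hKdef, Finset.mem_Icc] at hk
      have hsub : (L : ℤ) ∣ (k - k₀) := by
        have h' := dvd_sub hdvd0 hdvd
        have heq : n - k₀ - (n - k) = k - k₀ := by ring
        rwa [heq] at h'
      have hzero : k - k₀ = 0 :=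
        Int.eq_zero_of_abs_lt_dvd hsub (abs_lt.mpr ⟨by omega, by omega⟩)
      omega
    rw [if_pos hdvd0]
    -- now evaluate at the unique k₀
    set q : ℤ := (n + N) / L with hq
    have hq0 : 0 ≤ q := Int.ediv_nonneg (by omega) (by omega)
    have h2N : 2 * (N : ℤ) = 3 * (L : ℤ) - 1 := by
      have hN' : (N : ℤ) = 3 * N₀ + 1 := by exact_mod_cast congrArg (Nat.cast : ℕ → ℤ) hN
      have hL' : (L : ℤ) = 2 * N₀ + 1 := by exact_mod_cast congrArg (Nat.cast : ℕ → ℤ) hLdef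
      omega
    have hq3 : q < 3 := by
      have hmul : (L : ℤ) * q < (L : ℤ) * 3 := by omega
      exact lt_of_mul_lt_mul_left hmul (by omega)
    have hnk : n = k₀ + (L : ℤ) * q := by omega
    interval_cases q
    · have hc : ((n : ℤ) : ℂ) = ((k₀ : ℤ) : ℂ) := by
        have h' := congrArg (fun z : ℤ => (z : ℂ)) hnk
        push_cast at h'
        simpa using h'
      rw [hc, mciPsi_eval0 t _ _ hLC]
    · have hc : ((n : ℤ) : ℂ) = ((k₀ : ℤ) : ℂ) + (L : ℂ) := by
        have h' := congrArg (fun z : ℤ => (z : ℂ)) hnk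
        push_cast at h'
        simpa using h'
      rw [hc, mciPsi_eval1 t _ _ hLC]
    · have hc : ((n : ℤ) : ℂ) = ((k₀ : ℤ) : ℂ) + 2 * (L : ℂ) := by
        have h' := congrArg (fun z : ℤ => (z : ℂ)) hnk
        push_cast at h'
        rw [h']
        ring
      rw [hc, mciPsi_eval2 t _ _ hLC]
  -- Assemble everything
  have step5 : f t = ∑ n ∈ S, a n * mciE t (n : ℂ) := by
    rw [hf t]
    refine Finset.sum_congr rfl fun n _ => ?_
    rw [mciE_def]
  symm
  calc (1 / (L : ℂ)) * ∑ p ∈ Finset.range L,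
        (f (2 * π * p / L) * y₁ (t - 2 * π * p / L) +
         fd (2 * π * p / L) * y₂ (t - 2 * π * p / L) +
         fdd (2 * π * p / L) * y₃ (t - 2 * π * p / L))
      = (1 / (L : ℂ)) * ∑ p ∈ Finset.range L, ∑ n ∈ S, ∑ k ∈ K, a n *
          (mciC0 (L : ℂ) (n : ℂ) (k : ℂ) * mciE t (k : ℂ) * mciE (2 * π * p / L) (((n - k : ℤ)) : ℂ)
           + mciC1 (L : ℂ) (n : ℂ) (k : ℂ) * mciE t ((k : ℂ) + (L : ℂ)) *
               mciE (2 * π * p / L) (((n - k - L : ℤ)) : ℂ)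
           + mciC2 (L : ℂ) (n : ℂ) (k : ℂ) * mciE t ((k : ℂ) + 2 * (L : ℂ)) *
               mciE (2 * π * p / L) (((n - k - 2 * L : ℤ)) : ℂ)) := by
        rw [Finset.sum_congr rfl fun p _ => step1 p]
    _ = (1 / (L : ℂ)) * ∑ n ∈ S, ∑ k ∈ K, ∑ p ∈ Finset.range L, a n *
          (mciC0 (L : ℂ) (n : ℂ) (k : ℂ) * mciE t (k : ℂ) * mciE (2 * π * p / L) (((n - k : ℤ)) : ℂ)
           + mciC1 (L : ℂ) (n : ℂ) (k : ℂ) * mciE t ((k : ℂ) + (L : ℂ)) *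
               mciE (2 * π * p / L) (((n - k - L : ℤ)) : ℂ)
           + mciC2 (L : ℂ) (n : ℂ) (k : ℂ) * mciE t ((k : ℂ) + 2 * (L : ℂ)) *
               mciE (2 * π * p / L) (((n - k - 2 * L : ℤ)) : ℂ)) := by
        rw [Finset.sum_comm]
        congr 1
        exact Finset.sum_congr rfl fun n _ => by rw [Finset.sum_comm]
    _ = (1 / (L : ℂ)) * ∑ n ∈ S, ∑ k ∈ K,
          (if (L : ℤ) ∣ (n - k) then a n * ((L : ℂ) * mciPsi t (L : ℂ) (n : ℂ) (k : ℂ)) else 0) := by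
        congr 1
        exact Finset.sum_congr rfl fun n _ => Finset.sum_congr rfl fun k _ => step2 n k
    _ = ∑ n ∈ S, ∑ k ∈ K,
          (if (L : ℤ) ∣ (n - k) then a n * mciPsi t (L : ℂ) (n : ℂ) (k : ℂ) else 0) := by
        rw [Finset.mul_sum]
        refine Finset.sum_congr rfl fun n _ => ?_
        rw [Finset.mul_sum]
        refine Finset.sum_congr rfl fun k _ => ?_
        split_ifs with h
        · field_simp
        · ring
    _ = ∑ n ∈ S, a n * mciE t (n : ℂ) := Finset.sum_congr rfl step3
    _ = f t := step5.symm
end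

section
/- Let N be a natural number and f(t) = Σ_{n=−N}^{N} a(n) e^{int} with a(n) ∈ ℂ and a(0) = 0. Then for all t ∈ ℝ, f(t) = (1/(2N+1)) Σ_{p=0}^{2N} Hf(t_p) · y(t − t_p), where t_p = 2πp/(2N+1) and y(t) = Σ_{0<|n|≤N} i·sgn(n) e^{int}. -/
open Real

lemma orth_sum_zero (M : ℕ) (hM : 0 < M) (k : ℤ) (hk : ¬ ((M:ℤ) ∣ k)) :
    ∑ p ∈ Finset.range M,
      Complex.exp (2 * (π:ℂ) * Complex.I * k * p / M) = 0 := by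
  have hMne : (M:ℂ) ≠ 0 := Nat.cast_ne_zero.mpr hM.ne'
  have hπ : (π:ℂ) ≠ 0 := Complex.ofReal_ne_zero.mpr Real.pi_ne_zero
  have h2 : (2 * (π:ℂ) * Complex.I) ≠ 0 := by
    simp [hπ, Complex.I_ne_zero]
  have hterm : ∀ p ∈ Finset.range M,
      Complex.exp (2 * (π:ℂ) * Complex.I * k * p / M)
        = (Complex.exp (2 * (π:ℂ) * Complex.I * k / M)) ^ p := by
    intro p _
    rw [← Complex.exp_nat_mul]
    ring_nf
  rw [Finset.sum_congr rfl hterm]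
  have hx : Complex.exp (2 * (π:ℂ) * Complex.I * k / M) ≠ 1 := by
    rw [Ne, Complex.exp_eq_one_iff]
    rintro ⟨n, hn⟩
    apply hk
    have hkn : (k:ℂ) = (n:ℂ) * M := by
      have h' : (k:ℂ) * (2 * (π:ℂ) * Complex.I) = ((n:ℂ) * M) * (2 * (π:ℂ) * Complex.I) := by
        field_simp at hn
        linear_combination (2 * (π:ℂ) * Complex.I) * hn
      exact mul_right_cancel₀ h2 h'
    have : k = n * M := by exact_mod_cast hkn
    exact ⟨n, by rw [this]; ring⟩
  rw [geom_sum_eq hx]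
  have hpow : (Complex.exp (2 * (π:ℂ) * Complex.I * k / M)) ^ M = 1 := by
    rw [← Complex.exp_nat_mul]
    rw [show (M:ℂ) * (2 * (π:ℂ) * Complex.I * k / M) = (k:ℂ) * (2 * π * Complex.I) by
      field_simp]
    exact Complex.exp_int_mul_two_pi_mul_I k
  rw [hpow]
  simp

/-- Example 3.3, formula (16): a trigonometric polynomial with zero mean is exactly
reconstructed from the samples of its circular Hilbert transform. -/
theorem reconstruction_from_hilbert_samples
    (N : ℕ) (a : ℤ → ℂ) (ha0 : a 0 = 0)
    (f Hf y : ℝ → ℂ)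
    (hf : ∀ t : ℝ, f t = ∑ n ∈ Finset.Icc (-(N : ℤ)) (N : ℤ),
      a n * Complex.exp (Complex.I * (n : ℂ) * (t : ℂ)))
    (hHf : ∀ t : ℝ, Hf t = ∑ n ∈ Finset.Icc (-(N : ℤ)) (N : ℤ),
      (-Complex.I * ((Int.sign n : ℤ) : ℂ)) * a n * Complex.exp (Complex.I * (n : ℂ) * (t : ℂ)))
    (hy : ∀ t : ℝ, y t = ∑ n ∈ (Finset.Icc (-(N : ℤ)) (N : ℤ)).erase 0,
      Complex.I * ((Int.sign n : ℤ) : ℂ) * Complex.exp (Complex.I * (n : ℂ) * (t : ℂ))) :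
    ∀ t : ℝ, f t = (1 / (2 * (N : ℂ) + 1)) * ∑ p ∈ Finset.range (2 * N + 1),
      Hf (2 * π * p / (2 * N + 1)) * y (t - 2 * π * p / (2 * N + 1)) := by
  intro t
  set S : Finset ℤ := Finset.Icc (-(N : ℤ)) (N : ℤ) with hS
  set S' : Finset ℤ := S.erase 0 with hS'
  have hMne : (2 * (N : ℂ) + 1) ≠ 0 := by
    have h1 : ((2 * N + 1 : ℕ) : ℂ) = 2 * (N : ℂ) + 1 := by push_cast; ring
    rw [← h1]
    exact Nat.cast_ne_zero.mpr (by omega)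
  -- orthogonality
  have key : ∀ m ∈ S, ∀ n ∈ S,
      ∑ p ∈ Finset.range (2 * N + 1),
        Complex.exp (2 * (π:ℂ) * Complex.I * ((m - n : ℤ) : ℂ) * p / ((2 * N + 1 : ℕ) : ℂ))
      = if m = n then (2 * (N : ℂ) + 1) else 0 := by
    intro m hm n hn
    by_cases h : m = n
    · simp only [h, sub_self, Int.cast_zero, mul_zero, zero_mul, zero_div, mul_zero]
      simp [Complex.exp_zero]
    · rw [if_neg h]
      apply orth_sum_zero (2 * N + 1) (by omega)
      intro hd
      have hb : |m - n| < (2 * N + 1 : ℤ) := by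
        simp only [hS, Finset.mem_Icc] at hm hn
        rw [abs_lt]
        omega
      have := Int.eq_zero_of_abs_lt_dvd hd hb
      omega
  -- expand each sample term
  have hterm : ∀ p ∈ Finset.range (2 * N + 1),
      Hf (2 * π * p / (2 * N + 1)) * y (t - 2 * π * p / (2 * N + 1)) =
      ∑ m ∈ S, ∑ n ∈ S',
        ((-Complex.I * ((Int.sign m : ℤ) : ℂ)) * a m * (Complex.I * ((Int.sign n : ℤ) : ℂ))
          * Complex.exp (Complex.I * (n : ℂ) * (t : ℂ)))
        * Complex.exp (2 * (π:ℂ) * Complex.I * ((m - n : ℤ) : ℂ) * p / ((2 * N + 1 : ℕ) : ℂ)) := by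
    intro p _
    rw [hHf, hy, Finset.sum_mul_sum]
    refine Finset.sum_congr rfl fun m _ => Finset.sum_congr rfl fun n _ => ?_
    have e1 : (-Complex.I * ((Int.sign m : ℤ) : ℂ)) * a m
          * Complex.exp (Complex.I * (m : ℂ) * ((2 * π * p / (2 * N + 1) : ℝ) : ℂ))
        * (Complex.I * ((Int.sign n : ℤ) : ℂ)
          * Complex.exp (Complex.I * (n : ℂ) * ((t - 2 * π * p / (2 * N + 1) : ℝ) : ℂ)))
        = ((-Complex.I * ((Int.sign m : ℤ) : ℂ)) * a m * (Complex.I * ((Int.sign n : ℤ) : ℂ)))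
          * Complex.exp (Complex.I * (m : ℂ) * ((2 * π * p / (2 * N + 1) : ℝ) : ℂ)
              + Complex.I * (n : ℂ) * ((t - 2 * π * p / (2 * N + 1) : ℝ) : ℂ)) := by
      rw [Complex.exp_add]; ring
    rw [e1]
    have e2 : Complex.I * (m : ℂ) * ((2 * π * p / (2 * N + 1) : ℝ) : ℂ)
          + Complex.I * (n : ℂ) * ((t - 2 * π * p / (2 * N + 1) : ℝ) : ℂ)
        = Complex.I * (n : ℂ) * (t : ℂ)
          + 2 * (π:ℂ) * Complex.I * ((m - n : ℤ) : ℂ) * p / ((2 * N + 1 : ℕ) : ℂ) := by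
      have h1 : ((2 * N + 1 : ℕ) : ℂ) ≠ 0 := Nat.cast_ne_zero.mpr (by omega)
      push_cast at h1 ⊢
      field_simp
      ring
    rw [e2, Complex.exp_add]
    ring
  rw [Finset.sum_congr rfl hterm]
  -- swap sums and apply orthogonality
  rw [Finset.sum_comm]
  have hswap : ∀ m ∈ S,
      ∑ p ∈ Finset.range (2 * N + 1), ∑ n ∈ S',
        ((-Complex.I * ((Int.sign m : ℤ) : ℂ)) * a m * (Complex.I * ((Int.sign n : ℤ) : ℂ))
          * Complex.exp (Complex.I * (n : ℂ) * (t : ℂ)))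
        * Complex.exp (2 * (π:ℂ) * Complex.I * ((m - n : ℤ) : ℂ) * p / ((2 * N + 1 : ℕ) : ℂ))
      = ∑ n ∈ S', if m = n then
          ((-Complex.I * ((Int.sign m : ℤ) : ℂ)) * a m * (Complex.I * ((Int.sign n : ℤ) : ℂ))
            * Complex.exp (Complex.I * (n : ℂ) * (t : ℂ))) * (2 * (N : ℂ) + 1)
        else 0 := by
    intro m hm
    rw [Finset.sum_comm]
    refine Finset.sum_congr rfl fun n hn => ?_
    rw [← Finset.mul_sum, key m hm n (Finset.mem_of_mem_erase hn)]
    split_ifs with h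
    · ring
    · ring
  rw [Finset.sum_congr rfl hswap]
  -- collapse the diagonal
  have hdiag : ∑ m ∈ S, ∑ n ∈ S', (if m = n then
        ((-Complex.I * ((Int.sign m : ℤ) : ℂ)) * a m * (Complex.I * ((Int.sign n : ℤ) : ℂ))
          * Complex.exp (Complex.I * (n : ℂ) * (t : ℂ))) * (2 * (N : ℂ) + 1)
      else 0)
      = ∑ n ∈ S', ((-Complex.I * ((Int.sign n : ℤ) : ℂ)) * a n * (Complex.I * ((Int.sign n : ℤ) : ℂ))
          * Complex.exp (Complex.I * (n : ℂ) * (t : ℂ))) * (2 * (N : ℂ) + 1) := by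
    rw [Finset.sum_comm]
    refine Finset.sum_congr rfl fun n hn => ?_
    rw [Finset.sum_ite_eq' (S) n]
    simp [Finset.mem_of_mem_erase hn]
  rw [hdiag]
  -- simplify coefficients
  have hcoef : ∀ n ∈ S', (-Complex.I * ((Int.sign n : ℤ) : ℂ)) * a n
        * (Complex.I * ((Int.sign n : ℤ) : ℂ)) = a n := by
    intro n hn
    have hn0 : n ≠ 0 := Finset.ne_of_mem_erase hn
    have hs : (n.sign : ℂ) * (n.sign : ℂ) = 1 := by
      have : n.sign * n.sign = 1 := by
        rcases lt_trichotomy n 0 with h|h|h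
        · simp [Int.sign_eq_neg_one_iff_neg.mpr h]
        · exact absurd h hn0
        · simp [Int.sign_eq_one_iff_pos.mpr h]
      exact_mod_cast this
    calc (-Complex.I * ((Int.sign n : ℤ) : ℂ)) * a n * (Complex.I * ((Int.sign n : ℤ) : ℂ))
        = (-Complex.I * Complex.I) * ((n.sign : ℂ) * (n.sign : ℂ)) * a n := by push_cast; ring
      _ = a n := by rw [hs]; simp [Complex.I_mul_I]
  have hsum2 : ∑ n ∈ S',
      (-Complex.I * ((Int.sign n : ℤ) : ℂ)) * a n * (Complex.I * ((Int.sign n : ℤ) : ℂ))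
        * Complex.exp (Complex.I * (n : ℂ) * (t : ℂ)) * (2 * (N : ℂ) + 1)
      = f t * (2 * (N : ℂ) + 1) := by
    calc ∑ n ∈ S',
        (-Complex.I * ((Int.sign n : ℤ) : ℂ)) * a n * (Complex.I * ((Int.sign n : ℤ) : ℂ))
          * Complex.exp (Complex.I * (n : ℂ) * (t : ℂ)) * (2 * (N : ℂ) + 1)
        = ∑ n ∈ S', a n * Complex.exp (Complex.I * (n : ℂ) * (t : ℂ)) * (2 * (N : ℂ) + 1) := by
          refine Finset.sum_congr rfl fun n hn => ?_
          rw [hcoef n hn]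
      _ = (∑ n ∈ S', a n * Complex.exp (Complex.I * (n : ℂ) * (t : ℂ))) * (2 * (N : ℂ) + 1) := by
          rw [Finset.sum_mul]
      _ = f t * (2 * (N : ℂ) + 1) := by
          rw [hf t]
          congr 1
          exact Finset.sum_erase _ (by simp [ha0])
  rw [hsum2]
  field_simp
end

section
/- Let N be a natural number and f(t) = Σ_{n=−N}^{N} a(n) e^{int} with a(n) ∈ ℂ (no restriction on a(0)). Then for all t ∈ ℝ, Hf(t) = (1/(2N+1)) Σ_{p=0}^{2N} (f(t_p) − a(0)) · ỹ(t − t_p), where t_p = 2πp/(2N+1) and ỹ(t) = Σ_{0<|n|≤N} (−i·sgn(n)) e^{int}. -/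
open Real

lemma exp_sum_orth (M : ℕ) (hM : 0 < M) (k : ℤ) :
    ∑ p ∈ Finset.range M, Complex.exp (Complex.I * (k : ℂ) * (2 * π * p / M)) =
      if (M : ℤ) ∣ k then (M : ℂ) else 0 := by
  have hMc : (M : ℂ) ≠ 0 := Nat.cast_ne_zero.2 hM.ne'
  have hfun : ∀ p ∈ Finset.range M, Complex.exp (Complex.I * (k : ℂ) * (2 * π * p / M)) =
      (Complex.exp (Complex.I * (k : ℂ) * (2 * π / M))) ^ p := by
    intro p _
    rw [← Complex.exp_nat_mul]
    ring_nf
  rw [Finset.sum_congr rfl hfun]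
  by_cases hdvd : (M : ℤ) ∣ k
  · obtain ⟨c, rfl⟩ := hdvd
    have h1 : Complex.exp (Complex.I * (((M : ℤ) * c : ℤ) : ℂ) * (2 * π / M)) = 1 := by
      push_cast
      rw [show Complex.I * ((M : ℂ) * c) * (2 * π / M) = (c : ℂ) * (2 * π * Complex.I) by
        field_simp]
      exact Complex.exp_int_mul_two_pi_mul_I c
    rw [Finset.sum_congr rfl (fun p _ => by rw [h1, one_pow])]
    simp [dvd_mul_right]
  · have hω : Complex.exp (Complex.I * (k : ℂ) * (2 * π / M)) ≠ 1 := by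
      intro h
      rw [Complex.exp_eq_one_iff] at h
      obtain ⟨n, hn⟩ := h
      apply hdvd
      refine ⟨n, ?_⟩
      have h2π : (2 * (π:ℂ) * Complex.I) ≠ 0 := by
        simp [Complex.I_ne_zero, Complex.ofReal_ne_zero, Real.pi_ne_zero]
      have h2 : (k : ℂ) = (M : ℂ) * n := by
        field_simp at hn
        apply mul_right_cancel₀ h2π
        linear_combination (2 * (π:ℂ) * Complex.I) * hn
      exact_mod_cast h2
    rw [geom_sum_eq hω]
    have h3 : Complex.exp (Complex.I * (k : ℂ) * (2 * π / M)) ^ M = 1 := by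
      rw [← Complex.exp_nat_mul,
        show (M : ℂ) * (Complex.I * k * (2 * π / M)) = (k : ℂ) * (2 * π * Complex.I) by
          field_simp]
      exact Complex.exp_int_mul_two_pi_mul_I k
    simp [h3, hdvd]


/-- Example 3.3, formula (17): the circular Hilbert transform of a trigonometric
polynomial computed from the samples of the polynomial itself (valid without any
restriction on `a(0)`). -/
theorem hilbert_transform_from_samples
    (N : ℕ) (a : ℤ → ℂ)
    (f Hf ytilde : ℝ → ℂ)
    (hf : ∀ t : ℝ, f t = ∑ n ∈ Finset.Icc (-(N : ℤ)) (N : ℤ),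
      a n * Complex.exp (Complex.I * (n : ℂ) * (t : ℂ)))
    (hHf : ∀ t : ℝ, Hf t = ∑ n ∈ Finset.Icc (-(N : ℤ)) (N : ℤ),
      (-Complex.I * ((Int.sign n : ℤ) : ℂ)) * a n * Complex.exp (Complex.I * (n : ℂ) * (t : ℂ)))
    (hy : ∀ t : ℝ, ytilde t = ∑ n ∈ (Finset.Icc (-(N : ℤ)) (N : ℤ)).erase 0,
      (-Complex.I * ((Int.sign n : ℤ) : ℂ)) * Complex.exp (Complex.I * (n : ℂ) * (t : ℂ))) :
    ∀ t : ℝ, Hf t = (1 / (2 * (N : ℂ) + 1)) * ∑ p ∈ Finset.range (2 * N + 1),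
      (f (2 * π * p / (2 * N + 1)) - a 0) * ytilde (t - 2 * π * p / (2 * N + 1)) := by
  intro t
  set M : ℕ := 2 * N + 1 with hMdef
  have hMpos : 0 < M := Nat.succ_pos _
  have hMc : (M : ℂ) ≠ 0 := Nat.cast_ne_zero.2 hMpos.ne'
  set S := (Finset.Icc (-(N : ℤ)) (N : ℤ)).erase 0 with hSdef
  have h0mem : (0 : ℤ) ∈ Finset.Icc (-(N : ℤ)) (N : ℤ) := by simp
  have hMC : (2 * (N : ℂ) + 1) = (M : ℂ) := by push_cast [hMdef]; ring
  -- LHS as sum over S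
  have hHf' : Hf t = ∑ n ∈ S, (-Complex.I * ((Int.sign n : ℤ) : ℂ)) * a n *
      Complex.exp (Complex.I * (n : ℂ) * (t : ℂ)) := by
    rw [hHf, hSdef, Finset.sum_erase]
    simp
  -- samples
  have hsample : ∀ p : ℕ, f (2 * π * p / (2 * N + 1)) - a 0 =
      ∑ n ∈ S, a n * Complex.exp (Complex.I * (n : ℂ) *
        ((2 * π * p / (2 * N + 1) : ℝ) : ℂ)) := by
    intro p
    rw [hf, ← Finset.add_sum_erase _ _ h0mem, ← hSdef]
    simp
  -- key: the p-sum equals M * Hf t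
  have key : ∑ p ∈ Finset.range M,
      (f (2 * π * p / (2 * N + 1)) - a 0) * ytilde (t - 2 * π * p / (2 * N + 1))
      = (M : ℂ) * Hf t := by
    have step1 : ∀ p ∈ Finset.range M,
        (f (2 * π * p / (2 * N + 1)) - a 0) * ytilde (t - 2 * π * p / (2 * N + 1))
        = ∑ n ∈ S, ∑ m ∈ S,
          (a n * (-Complex.I * ((Int.sign m : ℤ) : ℂ))) *
            (Complex.exp (Complex.I * (m : ℂ) * (t : ℂ)) *
              Complex.exp (Complex.I * (((n - m : ℤ)) : ℂ) * (2 * π * p / M))) := by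
      intro p _
      rw [hsample p, hy, Finset.sum_mul_sum]
      refine Finset.sum_congr rfl fun n _ => Finset.sum_congr rfl fun m _ => ?_
      have hexp : Complex.exp (Complex.I * (n : ℂ) * ((2 * π * p / (2 * N + 1) : ℝ) : ℂ)) *
          Complex.exp (Complex.I * (m : ℂ) * ((t - 2 * π * p / (2 * N + 1) : ℝ) : ℂ))
          = Complex.exp (Complex.I * (m : ℂ) * (t : ℂ)) *
              Complex.exp (Complex.I * (((n - m : ℤ)) : ℂ) * (2 * π * p / M)) := by
        rw [← Complex.exp_add, ← Complex.exp_add]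
        congr 1
        push_cast [hMdef]
        ring
      linear_combination (a n * (-Complex.I * ((Int.sign m : ℤ) : ℂ))) * hexp
    rw [Finset.sum_congr rfl step1, Finset.sum_comm]
    have step2 : ∀ n ∈ S, ∑ p ∈ Finset.range M, ∑ m ∈ S,
        (a n * (-Complex.I * ((Int.sign m : ℤ) : ℂ))) *
          (Complex.exp (Complex.I * (m : ℂ) * (t : ℂ)) *
            Complex.exp (Complex.I * (((n - m : ℤ)) : ℂ) * (2 * π * p / M)))
        = (M : ℂ) * ((-Complex.I * ((Int.sign n : ℤ) : ℂ)) * a n *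
            Complex.exp (Complex.I * (n : ℂ) * (t : ℂ))) := by
      intro n hn
      rw [Finset.sum_comm]
      obtain ⟨hn0, hnIcc⟩ := Finset.mem_erase.1 hn
      obtain ⟨hn1, hn2⟩ := Finset.mem_Icc.1 hnIcc
      have inner : ∀ m ∈ S, ∑ p ∈ Finset.range M,
          (a n * (-Complex.I * ((Int.sign m : ℤ) : ℂ))) *
            (Complex.exp (Complex.I * (m : ℂ) * (t : ℂ)) *
              Complex.exp (Complex.I * (((n - m : ℤ)) : ℂ) * (2 * π * p / M)))
          = if n = m then (M : ℂ) * ((-Complex.I * ((Int.sign n : ℤ) : ℂ)) * a n *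
              Complex.exp (Complex.I * (n : ℂ) * (t : ℂ))) else 0 := by
        intro m hm
        obtain ⟨hm0, hmIcc⟩ := Finset.mem_erase.1 hm
        obtain ⟨hm1, hm2⟩ := Finset.mem_Icc.1 hmIcc
        have hiff : ((M : ℤ) ∣ (n - m)) ↔ n = m := by
          constructor
          · intro hdvd
            by_contra hne
            have hsub : n - m ≠ 0 := sub_ne_zero.2 hne
            have h1 : (M : ℤ) ≤ |n - m| :=
              Int.le_of_dvd (abs_pos.2 hsub) ((dvd_abs _ _).2 hdvd)
            have h2 : |n - m| ≤ 2 * (N : ℤ) := abs_le.mpr ⟨by omega, by omega⟩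
            have h3 : ((M : ℕ) : ℤ) = 2 * (N : ℤ) + 1 := by push_cast [hMdef]; ring
            linarith
          · rintro rfl; simp
        simp only [← Finset.mul_sum]
        rw [exp_sum_orth M hMpos (n - m)]
        simp only [hiff]
        by_cases h : n = m
        · subst h
          simp only [if_pos, if_true, eq_self_iff_true]
          ring
        · simp [h]
      rw [Finset.sum_congr rfl inner, Finset.sum_ite_eq S n _, if_pos hn]
    rw [Finset.sum_congr rfl step2, ← Finset.mul_sum, ← hHf']
  rw [key, hMC]
  field_simp
end

section
/- Let N be a natural number and f(t) = Σ_{n=−N}^{N} a(n) e^{int} with a(n) ∈ ℂ. Then for all t ∈ ℝ, f(t) + i·Hf(t) = (1/(N+1)) Σ_{p=0}^{N} ( f(t_p) + i·Hf(t_p) ) · y(t − t_p), where t_p = 2πp/(N+1) and y(t) = Σ_{n=0}^{N} e^{int}. -/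
open Real

lemma exp_sum_key (M : ℕ) (hM : 0 < M) (k : ℤ) (hk : k.natAbs < M) :
    ∑ p ∈ Finset.range M, Complex.exp (Complex.I * (k : ℂ) * (2 * π * p / M)) =
      if k = 0 then (M : ℂ) else 0 := by
  have hMC : (M : ℂ) ≠ 0 := Nat.cast_ne_zero.2 hM.ne'
  by_cases h0 : k = 0
  · simp [h0]
  · simp only [h0, if_false]
    set z := Complex.exp (Complex.I * (k : ℂ) * (2 * π / M)) with hz_def
    have hterm : ∀ p ∈ Finset.range M,
        Complex.exp (Complex.I * (k : ℂ) * (2 * π * p / M)) = z ^ p := by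
      intro p _
      rw [hz_def, ← Complex.exp_nat_mul]
      congr 1
      ring
    rw [Finset.sum_congr rfl hterm]
    have hzM : z ^ M = 1 := by
      rw [hz_def, ← Complex.exp_nat_mul]
      have : (M : ℂ) * (Complex.I * (k : ℂ) * (2 * π / M)) = (k : ℂ) * (2 * π * Complex.I) := by
        field_simp
      rw [this, Complex.exp_int_mul_two_pi_mul_I]
    have hz1 : z ≠ 1 := by
      intro h
      rw [hz_def, Complex.exp_eq_one_iff] at h
      obtain ⟨j, hj⟩ := h
      have h2 : (k : ℂ) = (j : ℂ) * M := by
        have h2pi : (2 * (π : ℂ) * Complex.I) ≠ 0 := Complex.two_pi_I_ne_zero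
        field_simp at hj
        apply mul_right_cancel₀ h2pi
        linear_combination (2 * (π : ℂ) * Complex.I) * hj
      have h3 : k = j * M := by exact_mod_cast h2
      have hj0 : j ≠ 0 := by rintro rfl; simp at h3; exact h0 h3
      have : (M : ℤ) ≤ k.natAbs := by
        rw [h3]
        calc (M:ℤ) ≤ |j| * M := by nlinarith [Int.one_le_abs (by exact_mod_cast hj0 : j ≠ 0), (Int.natCast_pos.2 hM)]
        _ = |j * M| := by rw [abs_mul]; simp [abs_of_nonneg (by positivity : (0:ℤ) ≤ (M:ℤ))]
        _ = (j*M).natAbs := (Int.abs_eq_natAbs _)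
      omega
    rw [geom_sum_eq hz1, hzM]
    simp

/-- Example 3.4: interpolation of the analytic signal `f + i·Hf` of a trigonometric
polynomial from its `N+1` equispaced samples. -/
theorem analytic_signal_interpolation
    (N : ℕ) (a : ℤ → ℂ)
    (f Hf y : ℝ → ℂ)
    (hf : ∀ t : ℝ, f t = ∑ n ∈ Finset.Icc (-(N : ℤ)) (N : ℤ),
      a n * Complex.exp (Complex.I * (n : ℂ) * (t : ℂ)))
    (hHf : ∀ t : ℝ, Hf t = ∑ n ∈ Finset.Icc (-(N : ℤ)) (N : ℤ),
      (-Complex.I * ((Int.sign n : ℤ) : ℂ)) * a n * Complex.exp (Complex.I * (n : ℂ) * (t : ℂ)))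
    (hy : ∀ t : ℝ, y t = ∑ n ∈ Finset.range (N + 1),
      Complex.exp (Complex.I * (n : ℂ) * (t : ℂ))) :
    ∀ t : ℝ, f t + Complex.I * Hf t = (1 / ((N : ℂ) + 1)) * ∑ p ∈ Finset.range (N + 1),
      (f (2 * π * p / (N + 1)) + Complex.I * Hf (2 * π * p / (N + 1))) *
        y (t - 2 * π * p / (N + 1)) := by
  have hMC : ((N : ℂ) + 1) ≠ 0 := by
    have : ((N + 1 : ℕ) : ℂ) ≠ 0 := Nat.cast_ne_zero.2 (Nat.succ_ne_zero N)
    push_cast at this; exact this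
  -- analytic signal as a sum over nonnegative frequencies
  have hg : ∀ s : ℝ, f s + Complex.I * Hf s =
      ∑ m ∈ Finset.range (N + 1),
        ((1 : ℂ) + (Int.sign (m : ℤ) : ℂ)) * a m * Complex.exp (Complex.I * (m : ℂ) * (s : ℂ)) := by
    intro s
    rw [hf, hHf, Finset.mul_sum, ← Finset.sum_add_distrib]
    have step1 : ∑ n ∈ Finset.Icc (-(N : ℤ)) (N : ℤ),
        (a n * Complex.exp (Complex.I * (n : ℂ) * (s : ℂ)) +
          Complex.I * ((-Complex.I * ((Int.sign n : ℤ) : ℂ)) * a n *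
            Complex.exp (Complex.I * (n : ℂ) * (s : ℂ)))) =
        ∑ n ∈ Finset.Icc (-(N : ℤ)) (N : ℤ),
        ((1 : ℂ) + (Int.sign n : ℂ)) * a n * Complex.exp (Complex.I * (n : ℂ) * (s : ℂ)) := by
      apply Finset.sum_congr rfl
      intro n _
      linear_combination (-((Int.sign n : ℂ) * a n * Complex.exp (Complex.I * (n : ℂ) * (s : ℂ)))) * Complex.I_mul_I
    rw [step1]
    rw [show Finset.Icc (-(N : ℤ)) (N : ℤ) = Finset.Icc (0 : ℤ) N ∪ Finset.Ico (-(N:ℤ)) 0 by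
      ext x; simp [Finset.mem_union, Finset.mem_Icc, Finset.mem_Ico]; omega]
    rw [Finset.sum_union (by
      rw [Finset.disjoint_left]; intro x hx hx'; simp [Finset.mem_Icc, Finset.mem_Ico] at hx hx'; omega)]
    have hneg : ∑ n ∈ Finset.Ico (-(N:ℤ)) 0,
        ((1 : ℂ) + (Int.sign n : ℂ)) * a n * Complex.exp (Complex.I * (n : ℂ) * (s : ℂ)) = 0 := by
      apply Finset.sum_eq_zero
      intro n hn
      simp only [Finset.mem_Ico] at hn
      have : Int.sign n = -1 := Int.sign_eq_neg_one_of_neg hn.2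
      simp [this]
    rw [hneg, add_zero]
    have himg : Finset.Icc (0 : ℤ) (N : ℤ) = Finset.image (Nat.cast) (Finset.range (N + 1)) := by
      ext x
      simp only [Finset.mem_Icc, Finset.mem_image, Finset.mem_range]
      constructor
      · rintro ⟨h0, h1⟩; exact ⟨x.toNat, by omega, by omega⟩
      · rintro ⟨m, hm, rfl⟩; omega
    rw [himg, Finset.sum_image (by intro x _ y _ h; exact_mod_cast h)]
    norm_cast
  -- now rewrite both sides
  intro t
  rw [hg t]
  rw [Finset.mul_sum]
  have hRHS : ∀ p ∈ Finset.range (N + 1),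
      (1 / ((N : ℂ) + 1)) * ((f (2 * π * p / (N + 1)) + Complex.I * Hf (2 * π * p / (N + 1))) *
        y (t - 2 * π * p / (N + 1))) =
      ∑ n ∈ Finset.range (N + 1), ∑ m ∈ Finset.range (N + 1),
        (1 / ((N : ℂ) + 1)) * (((1 : ℂ) + (Int.sign (n : ℤ) : ℂ)) * a n *
          Complex.exp (Complex.I * (m : ℂ) * (t : ℂ)) *
          Complex.exp (Complex.I * (((n : ℤ) - (m : ℤ) : ℤ) : ℂ) * (2 * π * p / ((N : ℂ) + 1)))) := by
    intro p _
    rw [hg, hy, Finset.sum_mul_sum, Finset.mul_sum]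
    apply Finset.sum_congr rfl
    intro n _
    rw [Finset.mul_sum]
    apply Finset.sum_congr rfl
    intro m _
    have he : Complex.exp (Complex.I * (n : ℂ) * ((2 * π * p / (N + 1) : ℝ) : ℂ)) *
        Complex.exp (Complex.I * (m : ℂ) * ((t - 2 * π * p / (N + 1) : ℝ) : ℂ)) =
        Complex.exp (Complex.I * (m : ℂ) * (t : ℂ)) *
        Complex.exp (Complex.I * (((n : ℤ) - (m : ℤ) : ℤ) : ℂ) * (2 * π * (p : ℂ) / ((N : ℂ) + 1))) := by
      rw [← Complex.exp_add, ← Complex.exp_add]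
      congr 1
      push_cast
      ring
    linear_combination (1 / ((N : ℂ) + 1) * ((1 + ((n : ℤ).sign : ℂ)) * a n)) * he
  rw [Finset.sum_congr rfl hRHS]
  rw [Finset.sum_comm]
  have hinner : ∀ n ∈ Finset.range (N + 1),
      ∑ p ∈ Finset.range (N + 1), ∑ m ∈ Finset.range (N + 1),
        (1 / ((N : ℂ) + 1)) * (((1 : ℂ) + (Int.sign (n : ℤ) : ℂ)) * a n *
          Complex.exp (Complex.I * (m : ℂ) * (t : ℂ)) *
          Complex.exp (Complex.I * (((n : ℤ) - (m : ℤ) : ℤ) : ℂ) * (2 * π * p / ((N : ℂ) + 1)))) =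
      ((1 : ℂ) + (Int.sign (n : ℤ) : ℂ)) * a n * Complex.exp (Complex.I * (n : ℂ) * (t : ℂ)) := by
    intro n hn
    rw [Finset.sum_comm]
    have hm : ∀ m ∈ Finset.range (N + 1),
        ∑ p ∈ Finset.range (N + 1),
          (1 / ((N : ℂ) + 1)) * (((1 : ℂ) + (Int.sign (n : ℤ) : ℂ)) * a n *
            Complex.exp (Complex.I * (m : ℂ) * (t : ℂ)) *
            Complex.exp (Complex.I * (((n : ℤ) - (m : ℤ) : ℤ) : ℂ) * (2 * π * p / ((N : ℂ) + 1)))) =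
        if m = n then ((1 : ℂ) + (Int.sign (n : ℤ) : ℂ)) * a n *
          Complex.exp (Complex.I * (n : ℂ) * (t : ℂ)) else 0 := by
      intro m hm
      rw [← Finset.mul_sum, ← Finset.mul_sum]
      have hkey := exp_sum_key (N + 1) (Nat.succ_pos N) ((n : ℤ) - m)
        (by simp only [Finset.mem_range] at hn hm; omega)
      have hcast : ∀ p : ℕ, (2 * π * (p : ℂ) / ((N + 1 : ℕ) : ℂ)) = (2 * π * (p : ℂ) / ((N : ℂ) + 1)) := by
        intro p; push_cast; ring
      simp only [hcast] at hkey
      rw [hkey]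
      simp only [Finset.mem_range] at hn hm
      by_cases hnm : m = n
      · subst hnm
        simp only [sub_self, if_pos rfl, if_pos rfl]
        push_cast
        field_simp
      · have : (n : ℤ) - m ≠ 0 := by omega
        simp [this, hnm]
    rw [Finset.sum_congr rfl hm, Finset.sum_ite_eq' (Finset.range (N + 1)) n]
    simp [hn]
  rw [Finset.sum_congr rfl hinner]
end

section
/- Let N be a natural number and f(t) = Σ_{n=−N}^{N} a(n) e^{int} with a(n) ∈ ℂ, and suppose f is real-valued (f(t) ∈ ℝ for all t ∈ ℝ). Then for all t ∈ ℝ, f(t) = (1/(N+1)) Σ_{p=0}^{N} [ f(t_p) y_r(t − t_p) − Hf(t_p) y_i(t − t_p) ], where t_p = 2πp/(N+1), y_r(t) = Σ_{n=0}^{N} cos(nt) and y_i(t) = Σ_{n=0}^{N} sin(nt). -/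
open Real

noncomputable def Dker (N : ℕ) (k : ℤ) : ℂ := if ((N : ℤ) + 1) ∣ k then ((N : ℂ) + 1) else 0

lemma expA (N : ℕ) (k : ℤ) :
    ∑ p ∈ Finset.range (N + 1),
      Complex.exp (Complex.I * (k : ℂ) * ((2 * π * p / (N + 1) : ℝ) : ℂ)) = Dker N k := by
  unfold Dker
  have hN : ((N : ℝ) + 1) ≠ 0 := by positivity
  have hNC : ((N : ℂ) + 1) ≠ 0 := by
    intro h; apply hN; exact_mod_cast congrArg Complex.re h
  set z : ℂ := Complex.exp (Complex.I * (k : ℂ) * ((2 * π / (N + 1) : ℝ) : ℂ)) with hz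
  have hterm : ∀ p ∈ Finset.range (N + 1),
      Complex.exp (Complex.I * (k : ℂ) * ((2 * π * p / (N + 1) : ℝ) : ℂ)) = z ^ p := by
    intro p _
    rw [hz, ← Complex.exp_nat_mul]
    congr 1
    push_cast
    ring
  rw [Finset.sum_congr rfl hterm]
  by_cases hdvd : ((N : ℤ) + 1) ∣ k
  · rw [if_pos hdvd]
    obtain ⟨c, hc⟩ := hdvd
    have hz1 : z = 1 := by
      rw [hz]
      have : Complex.I * (k : ℂ) * ((2 * π / (N + 1) : ℝ) : ℂ) = (c : ℂ) * (2 * π * Complex.I) := by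
        have hk : (k : ℂ) = ((N : ℂ) + 1) * (c : ℂ) := by exact_mod_cast hc
        rw [hk]
        push_cast
        field_simp
      rw [this, Complex.exp_int_mul_two_pi_mul_I]
    simp [hz1]
  · have hzN : z ^ (N + 1) = 1 := by
      rw [hz, ← Complex.exp_nat_mul]
      have : ((N + 1 : ℕ) : ℂ) * (Complex.I * (k : ℂ) * ((2 * π / (N + 1) : ℝ) : ℂ)) =
          (k : ℂ) * (2 * π * Complex.I) := by
        push_cast
        field_simp
      rw [this, Complex.exp_int_mul_two_pi_mul_I]
    have hz1 : z ≠ 1 := by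
      intro h
      rw [hz, Complex.exp_eq_one_iff] at h
      obtain ⟨n, hn⟩ := h
      apply hdvd
      have hC : (k : ℂ) * ((2 * π / (N + 1) : ℝ) : ℂ) = (n : ℂ) * (2 * π) := by
        have hn' : Complex.I * ((k : ℂ) * ((2 * π / (N + 1) : ℝ) : ℂ)) =
            Complex.I * ((n : ℂ) * (2 * π)) := by rw [← mul_assoc, hn]; ring
        exact mul_left_cancel₀ Complex.I_ne_zero hn'
      have hr : (k : ℝ) * (2 * π / (N + 1)) = (n : ℝ) * (2 * π) := by exact_mod_cast hC
      have htp : (2 * π) ≠ 0 := by positivity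
      have hk : (k : ℝ) = (n : ℝ) * ((N : ℝ) + 1) := by
        field_simp at hr
        have : (k : ℝ) * (2 * π) = ((n : ℝ) * ((N : ℝ) + 1)) * (2 * π) := by rw [hr]; ring
        exact mul_right_cancel₀ htp this
      refine ⟨n, ?_⟩
      have : (k : ℝ) = (((N : ℤ) + 1) * n : ℤ) := by push_cast; linarith [hk]
      exact_mod_cast this
    rw [geom_sum_eq hz1, hzN]
    simp [hdvd]

lemma dvd_small (N : ℕ) (k : ℤ) (h : ((N : ℤ) + 1) ∣ k) (h1 : -(2 * (N : ℤ)) ≤ k)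
    (h2 : k ≤ 2 * (N : ℤ)) : k = 0 ∨ k = (N : ℤ) + 1 ∨ k = -((N : ℤ) + 1) := by
  obtain ⟨c, rfl⟩ := h
  have hN : (0 : ℤ) ≤ (N : ℤ) := Int.ofNat_nonneg N
  have hc1 : c ≤ 1 := by nlinarith
  have hc2 : -1 ≤ c := by nlinarith
  interval_cases c
  · right; right; ring
  · left; ring
  · right; left; ring

lemma Dker_zero (N : ℕ) (k : ℤ) (h : ¬ ((N : ℤ) + 1) ∣ k) : Dker N k = 0 := if_neg h

lemma sumB (N : ℕ) (t : ℝ) (m : ℤ) (hm1 : -(N : ℤ) ≤ m) (hm2 : m ≤ (N : ℤ)) :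
    ∑ n ∈ Finset.range (N + 1),
      (((1 + ((Int.sign m : ℤ) : ℂ)) / 2) * Complex.exp (Complex.I * (n : ℂ) * (t : ℂ)) * Dker N (m - n)
      + ((1 - ((Int.sign m : ℤ) : ℂ)) / 2) * Complex.exp (-(Complex.I * (n : ℂ) * (t : ℂ))) * Dker N (m + n))
    = ((N : ℂ) + 1) * Complex.exp (Complex.I * (m : ℂ) * (t : ℂ)) := by
  rcases lt_trichotomy m 0 with h | h | h
  · -- m < 0
    have hs : ((Int.sign m : ℤ) : ℂ) = -1 := by
      rw [Int.sign_eq_neg_one_of_neg h]; norm_num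
    rw [Finset.sum_congr rfl (fun n _ => by
      rw [hs]
      ring_nf : ∀ n ∈ Finset.range (N + 1),
        (((1 + ((Int.sign m : ℤ) : ℂ)) / 2) * Complex.exp (Complex.I * (n : ℂ) * (t : ℂ)) * Dker N (m - n)
        + ((1 - ((Int.sign m : ℤ) : ℂ)) / 2) * Complex.exp (-(Complex.I * (n : ℂ) * (t : ℂ))) * Dker N (m + n))
        = Complex.exp (-(Complex.I * (n : ℂ) * (t : ℂ))) * Dker N (m + n))]
    rw [Finset.sum_eq_single ((-m).toNat)]
    · have hcc : (((-m).toNat : ℕ) : ℂ) = -(m : ℂ) := by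
        have := Int.toNat_of_nonneg (by omega : (0:ℤ) ≤ -m)
        exact_mod_cast this
      have hD : Dker N (m + (-m).toNat) = (N : ℂ) + 1 := by
        have h0 : m + (((-m).toNat : ℤ)) = 0 := by omega
        rw [h0]; exact if_pos (dvd_zero _)
      rw [hD, hcc]
      ring_nf
    · intro n hn hne
      simp only [Finset.mem_range] at hn
      have hD2 : Dker N (m + n) = 0 := by
        apply Dker_zero; intro hd
        rcases dvd_small N _ hd (by omega) (by omega) with h' | h' | h' <;> omega
      rw [hD2]; ring
    · intro hmem; exfalso; apply hmem; simp only [Finset.mem_range]; omega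
  · -- m = 0
    subst h
    rw [Finset.sum_eq_single 0]
    · have hD : Dker N 0 = (N : ℂ) + 1 := if_pos (dvd_zero _)
      simp only [Int.sign_zero, Nat.cast_zero, zero_sub, zero_add, neg_zero, hD,
        Int.cast_zero, mul_zero, zero_mul, Complex.exp_zero]
      ring_nf
    · intro n hn hne
      simp only [Finset.mem_range] at hn
      have hD1 : Dker N (0 - n) = 0 := by
        apply Dker_zero; intro hd
        rcases dvd_small N _ hd (by omega) (by omega) with h' | h' | h' <;> omega
      have hD2 : Dker N (0 + n) = 0 := by
        apply Dker_zero; intro hd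
        rcases dvd_small N _ hd (by omega) (by omega) with h' | h' | h' <;> omega
      rw [hD1, hD2]; ring
    · intro hmem; exfalso; apply hmem; simp
  · -- m > 0
    have hs : ((Int.sign m : ℤ) : ℂ) = 1 := by
      rw [Int.sign_eq_one_of_pos h]; norm_num
    rw [Finset.sum_congr rfl (fun n _ => by
      rw [hs]
      ring_nf : ∀ n ∈ Finset.range (N + 1),
        (((1 + ((Int.sign m : ℤ) : ℂ)) / 2) * Complex.exp (Complex.I * (n : ℂ) * (t : ℂ)) * Dker N (m - n)
        + ((1 - ((Int.sign m : ℤ) : ℂ)) / 2) * Complex.exp (-(Complex.I * (n : ℂ) * (t : ℂ))) * Dker N (m + n))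
        = Complex.exp (Complex.I * (n : ℂ) * (t : ℂ)) * Dker N (m - n))]
    rw [Finset.sum_eq_single (m.toNat)]
    · have hcc : ((m.toNat : ℕ) : ℂ) = (m : ℂ) := by
        have := Int.toNat_of_nonneg (le_of_lt h); exact_mod_cast this
      have hD : Dker N (m - m.toNat) = (N : ℂ) + 1 := by
        have h0 : m - ((m.toNat : ℤ)) = 0 := by omega
        rw [h0]; exact if_pos (dvd_zero _)
      rw [hD, hcc]; ring
    · intro n hn hne
      simp only [Finset.mem_range] at hn
      have hD1 : Dker N (m - n) = 0 := by
        apply Dker_zero; intro hd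
        rcases dvd_small N _ hd (by omega) (by omega) with h' | h' | h' <;> omega
      rw [hD1]; ring
    · intro hmem; exfalso; apply hmem; simp only [Finset.mem_range]; omega

lemma ptwise (m : ℤ) (n : ℕ) (t b : ℝ) (A s : ℂ) :
    A * Complex.exp (Complex.I * (m : ℂ) * (b : ℂ)) * ((Real.cos ((n : ℝ) * (t - b)) : ℝ) : ℂ)
    - -Complex.I * s * A * Complex.exp (Complex.I * (m : ℂ) * (b : ℂ))
        * ((Real.sin ((n : ℝ) * (t - b)) : ℝ) : ℂ)
    = (((1 + s) / 2) * Complex.exp (Complex.I * (n : ℂ) * (t : ℂ)) * A)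
        * Complex.exp (Complex.I * ((m - (n : ℤ) : ℤ) : ℂ) * (b : ℂ))
      + (((1 - s) / 2) * Complex.exp (-(Complex.I * (n : ℂ) * (t : ℂ))) * A)
        * Complex.exp (Complex.I * ((m + (n : ℤ) : ℤ) : ℂ) * (b : ℂ)) := by
  set z : ℂ := (((n : ℝ) * (t - b) : ℝ) : ℂ) with hzdef
  set E : ℂ := Complex.exp (Complex.I * (n : ℂ) * ((t : ℂ) - (b : ℂ))) with hE
  set E' : ℂ := Complex.exp (-(Complex.I * (n : ℂ) * ((t : ℂ) - (b : ℂ)))) with hE'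
  have e1 : E = Complex.cos z + Complex.sin z * Complex.I := by
    rw [hE, show Complex.I * (n : ℂ) * ((t : ℂ) - (b : ℂ)) = z * Complex.I by
      simp only [z]; push_cast; ring, Complex.exp_mul_I]
  have e2 : E' = Complex.cos z - Complex.sin z * Complex.I := by
    rw [hE', show -(Complex.I * (n : ℂ) * ((t : ℂ) - (b : ℂ))) = (-z) * Complex.I by
      simp only [z]; push_cast; ring, Complex.exp_mul_I, Complex.cos_neg, Complex.sin_neg]
    ring
  have hc : ((Real.cos ((n : ℝ) * (t - b)) : ℝ) : ℂ) = (E + E') / 2 := by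
    rw [Complex.ofReal_cos, e1, e2]; ring
  have hsI : ((Real.sin ((n : ℝ) * (t - b)) : ℝ) : ℂ) * Complex.I = (E - E') / 2 := by
    rw [Complex.ofReal_sin, e1, e2]; ring
  have hEE1 : Complex.exp (Complex.I * (m : ℂ) * (b : ℂ)) * E
      = Complex.exp (Complex.I * (n : ℂ) * (t : ℂ))
        * Complex.exp (Complex.I * ((m - (n : ℤ) : ℤ) : ℂ) * (b : ℂ)) := by
    rw [hE, ← Complex.exp_add, ← Complex.exp_add]
    congr 1
    push_cast
    ring
  have hEE2 : Complex.exp (Complex.I * (m : ℂ) * (b : ℂ)) * E'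
      = Complex.exp (-(Complex.I * (n : ℂ) * (t : ℂ)))
        * Complex.exp (Complex.I * ((m + (n : ℤ) : ℤ) : ℂ) * (b : ℂ)) := by
    rw [hE', ← Complex.exp_add, ← Complex.exp_add]
    congr 1
    push_cast
    ring
  calc A * Complex.exp (Complex.I * (m : ℂ) * (b : ℂ)) * ((Real.cos ((n : ℝ) * (t - b)) : ℝ) : ℂ)
        - -Complex.I * s * A * Complex.exp (Complex.I * (m : ℂ) * (b : ℂ))
          * ((Real.sin ((n : ℝ) * (t - b)) : ℝ) : ℂ)
      = A * Complex.exp (Complex.I * (m : ℂ) * (b : ℂ)) * ((Real.cos ((n : ℝ) * (t - b)) : ℝ) : ℂ)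
        + s * A * Complex.exp (Complex.I * (m : ℂ) * (b : ℂ))
          * (((Real.sin ((n : ℝ) * (t - b)) : ℝ) : ℂ) * Complex.I) := by ring
    _ = A * Complex.exp (Complex.I * (m : ℂ) * (b : ℂ)) * ((E + E') / 2)
        + s * A * Complex.exp (Complex.I * (m : ℂ) * (b : ℂ)) * ((E - E') / 2) := by
        rw [hc, hsI]
    _ = ((1 + s) / 2) * (Complex.exp (Complex.I * (m : ℂ) * (b : ℂ)) * E) * A
        + ((1 - s) / 2) * (Complex.exp (Complex.I * (m : ℂ) * (b : ℂ)) * E') * A := by ring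
    _ = _ := by rw [hEE1, hEE2]; ring

/-- Example 3.4, formula (19): a real-valued trigonometric polynomial reconstructed
from the samples of itself and of its circular Hilbert transform. -/
theorem real_signal_from_self_and_hilbert_samples
    (N : ℕ) (a : ℤ → ℂ)
    (f Hf : ℝ → ℂ)
    (hf : ∀ t : ℝ, f t = ∑ n ∈ Finset.Icc (-(N : ℤ)) (N : ℤ),
      a n * Complex.exp (Complex.I * (n : ℂ) * (t : ℂ)))
    (hreal : ∀ t : ℝ, (f t).im = 0)
    (hHf : ∀ t : ℝ, Hf t = ∑ n ∈ Finset.Icc (-(N : ℤ)) (N : ℤ),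
      (-Complex.I * ((Int.sign n : ℤ) : ℂ)) * a n * Complex.exp (Complex.I * (n : ℂ) * (t : ℂ)))
    (yr yi : ℝ → ℝ)
    (hyr : ∀ t : ℝ, yr t = ∑ n ∈ Finset.range (N + 1), Real.cos (n * t))
    (hyi : ∀ t : ℝ, yi t = ∑ n ∈ Finset.range (N + 1), Real.sin (n * t)) :
    ∀ t : ℝ, f t = (1 / ((N : ℂ) + 1)) * ∑ p ∈ Finset.range (N + 1),
      (f (2 * π * p / (N + 1)) * ((yr (t - 2 * π * p / (N + 1)) : ℝ) : ℂ) -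
       Hf (2 * π * p / (N + 1)) * ((yi (t - 2 * π * p / (N + 1)) : ℝ) : ℂ)) := by
  intro t
  have hN : ((N : ℝ) + 1) ≠ 0 := by positivity
  have hNC : ((N : ℂ) + 1) ≠ 0 := by
    intro h; apply hN; exact_mod_cast congrArg Complex.re h
  have key : (∑ p ∈ Finset.range (N + 1),
      (f (2 * π * p / (N + 1)) * ((yr (t - 2 * π * p / (N + 1)) : ℝ) : ℂ) -
       Hf (2 * π * p / (N + 1)) * ((yi (t - 2 * π * p / (N + 1)) : ℝ) : ℂ)))
      = ((N : ℂ) + 1) * f t := by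
    calc (∑ p ∈ Finset.range (N + 1),
        (f (2 * π * p / (N + 1)) * ((yr (t - 2 * π * p / (N + 1)) : ℝ) : ℂ) -
         Hf (2 * π * p / (N + 1)) * ((yi (t - 2 * π * p / (N + 1)) : ℝ) : ℂ)))
        = ∑ p ∈ Finset.range (N + 1), ∑ m ∈ Finset.Icc (-(N : ℤ)) (N : ℤ),
            ∑ n ∈ Finset.range (N + 1),
            ((((1 + ((Int.sign m : ℤ) : ℂ)) / 2) * Complex.exp (Complex.I * (n : ℂ) * (t : ℂ)) * a m)
              * Complex.exp (Complex.I * ((m - (n : ℤ) : ℤ) : ℂ) * ((2 * π * p / (N + 1) : ℝ) : ℂ))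
            + (((1 - ((Int.sign m : ℤ) : ℂ)) / 2) * Complex.exp (-(Complex.I * (n : ℂ) * (t : ℂ))) * a m)
              * Complex.exp (Complex.I * ((m + (n : ℤ) : ℤ) : ℂ) * ((2 * π * p / (N + 1) : ℝ) : ℂ))) := by
          refine Finset.sum_congr rfl fun p _ => ?_
          rw [hf, hHf, hyr, hyi, Complex.ofReal_sum, Complex.ofReal_sum,
            Finset.sum_mul_sum, Finset.sum_mul_sum, ← Finset.sum_sub_distrib]
          refine Finset.sum_congr rfl fun m _ => ?_
          rw [← Finset.sum_sub_distrib]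
          exact Finset.sum_congr rfl fun n _ =>
            ptwise m n t (2 * π * p / (N + 1)) (a m) ((Int.sign m : ℤ) : ℂ)
      _ = ∑ m ∈ Finset.Icc (-(N : ℤ)) (N : ℤ), ∑ n ∈ Finset.range (N + 1),
            ∑ p ∈ Finset.range (N + 1),
            ((((1 + ((Int.sign m : ℤ) : ℂ)) / 2) * Complex.exp (Complex.I * (n : ℂ) * (t : ℂ)) * a m)
              * Complex.exp (Complex.I * ((m - (n : ℤ) : ℤ) : ℂ) * ((2 * π * p / (N + 1) : ℝ) : ℂ))
            + (((1 - ((Int.sign m : ℤ) : ℂ)) / 2) * Complex.exp (-(Complex.I * (n : ℂ) * (t : ℂ))) * a m)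
              * Complex.exp (Complex.I * ((m + (n : ℤ) : ℤ) : ℂ) * ((2 * π * p / (N + 1) : ℝ) : ℂ))) := by
          rw [Finset.sum_comm]
          exact Finset.sum_congr rfl fun m _ => Finset.sum_comm
      _ = ∑ m ∈ Finset.Icc (-(N : ℤ)) (N : ℤ), ∑ n ∈ Finset.range (N + 1),
            ((((1 + ((Int.sign m : ℤ) : ℂ)) / 2) * Complex.exp (Complex.I * (n : ℂ) * (t : ℂ)) * a m)
              * Dker N (m - n)
            + (((1 - ((Int.sign m : ℤ) : ℂ)) / 2) * Complex.exp (-(Complex.I * (n : ℂ) * (t : ℂ))) * a m)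
              * Dker N (m + n)) := by
          refine Finset.sum_congr rfl fun m _ => Finset.sum_congr rfl fun n _ => ?_
          rw [Finset.sum_add_distrib, ← Finset.mul_sum, ← Finset.mul_sum, expA, expA]
      _ = ∑ m ∈ Finset.Icc (-(N : ℤ)) (N : ℤ),
            a m * (((N : ℂ) + 1) * Complex.exp (Complex.I * (m : ℂ) * (t : ℂ))) := by
          refine Finset.sum_congr rfl fun m hm => ?_
          rw [Finset.mem_Icc] at hm
          rw [show (∑ n ∈ Finset.range (N + 1),
            ((((1 + ((Int.sign m : ℤ) : ℂ)) / 2) * Complex.exp (Complex.I * (n : ℂ) * (t : ℂ)) * a m)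
              * Dker N (m - n)
            + (((1 - ((Int.sign m : ℤ) : ℂ)) / 2) * Complex.exp (-(Complex.I * (n : ℂ) * (t : ℂ))) * a m)
              * Dker N (m + n)))
            = a m * ∑ n ∈ Finset.range (N + 1),
              (((1 + ((Int.sign m : ℤ) : ℂ)) / 2) * Complex.exp (Complex.I * (n : ℂ) * (t : ℂ)) * Dker N (m - n)
              + ((1 - ((Int.sign m : ℤ) : ℂ)) / 2) * Complex.exp (-(Complex.I * (n : ℂ) * (t : ℂ))) * Dker N (m + n))
            from by rw [Finset.mul_sum]; exact Finset.sum_congr rfl fun n _ => by ring]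
          rw [sumB N t m hm.1 hm.2]
      _ = ((N : ℂ) + 1) * f t := by
          rw [hf t, Finset.mul_sum]
          exact Finset.sum_congr rfl fun m _ => by ring
  rw [key, one_div, inv_mul_cancel_left₀ hNC]
end

section
/- Let N be a natural number and f(t) = Σ_{n=−N}^{N} a(n) e^{int} with a(n) ∈ ℂ, and suppose f is real-valued (f(t) ∈ ℝ for all t ∈ ℝ). Then for all t ∈ ℝ, Hf(t) = (1/(N+1)) Σ_{p=0}^{N} [ f(t_p) y_i(t − t_p) + Hf(t_p) y_r(t − t_p) ], where t_p = 2πp/(N+1), y_r(t) = Σ_{n=0}^{N} cos(nt) and y_i(t) = Σ_{n=0}^{N} sin(nt). -/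
open Real

private noncomputable def cE (n : ℤ) (t : ℝ) : ℂ := Complex.exp (Complex.I * n * t)

private lemma orth (N : ℕ) (k : ℤ) :
    ∑ p ∈ Finset.range (N + 1), cE k (2 * π * p / (N + 1)) =
      if ((N : ℤ) + 1) ∣ k then ((N : ℂ) + 1) else 0 := by
  have hN : ((N : ℂ) + 1) ≠ 0 := by
    have := Nat.cast_add_one_ne_zero (R := ℂ) N
    push_cast at this ⊢; exact this
  set z : ℂ := Complex.exp (2 * π * Complex.I * k / ((N : ℂ) + 1)) with hz
  have hterm : ∀ p ∈ Finset.range (N + 1), cE k (2 * π * p / (N + 1)) = z ^ p := by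
    intro p _
    rw [hz, ← Complex.exp_nat_mul, cE]
    congr 1
    push_cast
    field_simp
  rw [Finset.sum_congr rfl hterm]
  by_cases hdvd : ((N : ℤ) + 1) ∣ k
  · rw [if_pos hdvd]
    obtain ⟨j, hj⟩ := hdvd
    have hz1 : z = 1 := by
      rw [hz, hj]
      have : (2 * ↑π * Complex.I * (((N : ℤ) + 1 : ℤ) * j : ℤ) / ((N : ℂ) + 1)) =
          (j : ℂ) * (2 * π * Complex.I) := by push_cast; field_simp
      rw [this, Complex.exp_int_mul_two_pi_mul_I]
    simp [hz1]
  · rw [if_neg hdvd]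
    have hzpow : z ^ (N + 1) = 1 := by
      rw [hz, ← Complex.exp_nat_mul]
      have : ((N : ℂ) + 1) * (2 * ↑π * Complex.I * ↑k / ((N : ℂ) + 1)) =
          (k : ℂ) * (2 * π * Complex.I) := by field_simp
      push_cast
      rw [this, Complex.exp_int_mul_two_pi_mul_I]
    have hzne : z ≠ 1 := by
      intro h
      rw [hz, Complex.exp_eq_one_iff] at h
      obtain ⟨j, hj⟩ := h
      apply hdvd
      refine ⟨j, ?_⟩
      have hI : (2 * (π : ℂ) * Complex.I) ≠ 0 := by
        simp [Real.pi_ne_zero, Complex.I_ne_zero, Complex.ofReal_ne_zero]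
      have : (k : ℂ) = ((N : ℂ) + 1) * j := by
        field_simp at hj
        have h2 : (k : ℂ) * (2 * ↑π * Complex.I) = ((N:ℂ)+1) * j * (2 * ↑π * Complex.I) := by
          linear_combination (2 * ↑π * Complex.I) * hj
        exact mul_right_cancel₀ hI h2
      exact_mod_cast this
    rw [geom_sum_eq hzne, hzpow]
    simp


private noncomputable def Dv (N : ℕ) (k : ℤ) : ℂ := if ((N : ℤ) + 1) ∣ k then ((N : ℂ) + 1) else 0

private lemma Dv_zero (N : ℕ) : Dv N 0 = ((N : ℂ) + 1) := by simp [Dv]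

private lemma Dv_ne (N : ℕ) (k : ℤ) (h0 : k ≠ 0) (h : |k| < (N : ℤ) + 1) : Dv N k = 0 := by
  rw [Dv, if_neg]
  intro hd
  exact h0 (Int.eq_zero_of_abs_lt_dvd hd h)

private lemma keypt (n : ℤ) (m : ℕ) (t s : ℝ) :
    cE n s * (((Real.sin (m * (t - s)) : ℝ) : ℂ)
        + (-Complex.I * ((Int.sign n : ℤ) : ℂ)) * ((Real.cos (m * (t - s)) : ℝ) : ℂ))
    = (-Complex.I / 2) * (1 + ((Int.sign n : ℤ) : ℂ)) * cE m t * cE (n - m) s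
      + (Complex.I / 2) * (1 - ((Int.sign n : ℤ) : ℂ)) * cE (-(m : ℤ)) t * cE (n + m) s := by
  have hsin : ((Real.sin (m * (t - s)) : ℝ) : ℂ)
      = (Complex.exp (Complex.I * ((m * (t - s) : ℝ) : ℂ))
        - Complex.exp (-(Complex.I * ((m * (t - s) : ℝ) : ℂ)))) * (-Complex.I) / 2 := by
    rw [Complex.ofReal_sin, Complex.sin]; ring_nf
  have hcos : ((Real.cos (m * (t - s)) : ℝ) : ℂ)
      = (Complex.exp (Complex.I * ((m * (t - s) : ℝ) : ℂ))
        + Complex.exp (-(Complex.I * ((m * (t - s) : ℝ) : ℂ)))) / 2 := by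
    rw [Complex.ofReal_cos, Complex.cos]; ring_nf
  have e1 : cE n s * Complex.exp (Complex.I * ((m * (t - s) : ℝ) : ℂ))
      = cE m t * cE (n - m) s := by
    simp only [cE, ← Complex.exp_add]; congr 1; push_cast; ring
  have e2 : cE n s * Complex.exp (-(Complex.I * ((m * (t - s) : ℝ) : ℂ)))
      = cE (-(m : ℤ)) t * cE (n + m) s := by
    simp only [cE, ← Complex.exp_add]; congr 1; push_cast; ring
  rw [hsin, hcos]
  linear_combination ((-Complex.I / 2) * (1 + ((Int.sign n : ℤ) : ℂ))) * e1
    + ((Complex.I / 2) * (1 - ((Int.sign n : ℤ) : ℂ))) * e2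

private lemma innerSumLem (N : ℕ) (t : ℝ) (n : ℤ) (hn1 : -(N : ℤ) ≤ n) (hn2 : n ≤ (N : ℤ)) :
    ∑ m ∈ Finset.range (N + 1),
      ((-Complex.I / 2) * (1 + ((Int.sign n : ℤ) : ℂ)) * cE m t * Dv N (n - m)
        + (Complex.I / 2) * (1 - ((Int.sign n : ℤ) : ℂ)) * cE (-(m : ℤ)) t * Dv N (n + m))
    = ((N : ℂ) + 1) * ((-Complex.I * ((Int.sign n : ℤ) : ℂ)) * cE n t) := by
  rcases lt_trichotomy n 0 with hneg | h0 | hpos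
  · -- n < 0 : first coefficient vanishes, second picks m = (-n).toNat
    have hs : Int.sign n = -1 := Int.sign_eq_neg_one_of_neg hneg
    rw [Finset.sum_eq_single_of_mem (-n).toNat (by
      simp only [Finset.mem_range]; omega)]
    · have h0' : n + ((-n).toNat : ℤ) = 0 := by omega
      have hc : cE (-((-n).toNat : ℤ)) t = cE n t := by congr 1; omega
      rw [h0', Dv_zero, hc, hs]
      push_cast
      ring
    · intro m hm hm0
      simp only [Finset.mem_range] at hm
      have hD2 : Dv N (n + m) = 0 := by
        apply Dv_ne _ _ (by omega)
        rw [abs_lt]; omega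
      rw [hD2, hs]
      push_cast
      ring
  · subst h0
    rw [Finset.sum_eq_single_of_mem 0 (by simp)]
    · simp [Dv_zero, cE]
      ring
    · intro m hm hm0
      simp only [Finset.mem_range] at hm
      have hmN : (m : ℤ) ≠ 0 := by exact_mod_cast hm0
      have hD1 : Dv N (0 - m) = 0 := by
        apply Dv_ne _ _ (by omega)
        rw [abs_lt]; omega
      have hD2 : Dv N (0 + m) = 0 := by
        apply Dv_ne _ _ (by omega)
        rw [abs_lt]; omega
      rw [hD1, hD2]; ring
  · -- n > 0 : second coefficient vanishes, first picks m = n.toNat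
    have hs : Int.sign n = 1 := Int.sign_eq_one_of_pos hpos
    rw [Finset.sum_eq_single_of_mem n.toNat (by
      simp only [Finset.mem_range]; omega)]
    · have h0' : n - (n.toNat : ℤ) = 0 := by omega
      have hc : cE ((n.toNat : ℤ)) t = cE n t := by congr 1; omega
      rw [h0', Dv_zero, hc, hs]
      push_cast
      ring
    · intro m hm hm0
      simp only [Finset.mem_range] at hm
      have hD1 : Dv N (n - m) = 0 := by
        apply Dv_ne _ _ (by omega)
        rw [abs_lt]; omega
      rw [hD1, hs]
      push_cast
      ring

private lemma orthD (N : ℕ) (k : ℤ) :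
    ∑ p ∈ Finset.range (N + 1), cE k (2 * π * p / (N + 1)) = Dv N k := orth N k

/-- Example 3.4, formula (20): the circular Hilbert transform of a real-valued
trigonometric polynomial reconstructed from the samples of the polynomial and of
its Hilbert transform. -/
theorem hilbert_of_real_signal_from_self_and_hilbert_samples
    (N : ℕ) (a : ℤ → ℂ)
    (f Hf : ℝ → ℂ)
    (hf : ∀ t : ℝ, f t = ∑ n ∈ Finset.Icc (-(N : ℤ)) (N : ℤ),
      a n * Complex.exp (Complex.I * (n : ℂ) * (t : ℂ)))
    (hreal : ∀ t : ℝ, (f t).im = 0)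
    (hHf : ∀ t : ℝ, Hf t = ∑ n ∈ Finset.Icc (-(N : ℤ)) (N : ℤ),
      (-Complex.I * ((Int.sign n : ℤ) : ℂ)) * a n * Complex.exp (Complex.I * (n : ℂ) * (t : ℂ)))
    (yr yi : ℝ → ℝ)
    (hyr : ∀ t : ℝ, yr t = ∑ n ∈ Finset.range (N + 1), Real.cos (n * t))
    (hyi : ∀ t : ℝ, yi t = ∑ n ∈ Finset.range (N + 1), Real.sin (n * t)) :
    ∀ t : ℝ, Hf t = (1 / ((N : ℂ) + 1)) * ∑ p ∈ Finset.range (N + 1),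
      (f (2 * π * p / (N + 1)) * ((yi (t - 2 * π * p / (N + 1)) : ℝ) : ℂ) +
       Hf (2 * π * p / (N + 1)) * ((yr (t - 2 * π * p / (N + 1)) : ℝ) : ℂ)) := by
  intro t
  have hN : ((N : ℂ) + 1) ≠ 0 := by
    have := Nat.cast_add_one_ne_zero (R := ℂ) N
    push_cast at this ⊢; exact this
  have step1 : ∀ p : ℕ,
      f (2 * π * p / (N + 1)) * ((yi (t - 2 * π * p / (N + 1)) : ℝ) : ℂ) +
        Hf (2 * π * p / (N + 1)) * ((yr (t - 2 * π * p / (N + 1)) : ℝ) : ℂ)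
      = ∑ n ∈ Finset.Icc (-(N : ℤ)) (N : ℤ), ∑ m ∈ Finset.range (N + 1),
          a n * ((-Complex.I / 2) * (1 + ((Int.sign n : ℤ) : ℂ)) * cE m t
              * cE (n - m) (2 * π * p / (N + 1))
            + (Complex.I / 2) * (1 - ((Int.sign n : ℤ) : ℂ)) * cE (-(m : ℤ)) t
              * cE (n + m) (2 * π * p / (N + 1))) := by
    intro p
    rw [hf, hHf, hyi, hyr, Complex.ofReal_sum, Complex.ofReal_sum,
        Finset.sum_mul_sum, Finset.sum_mul_sum, ← Finset.sum_add_distrib]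
    refine Finset.sum_congr rfl fun n _ => ?_
    rw [← Finset.sum_add_distrib]
    refine Finset.sum_congr rfl fun m _ => ?_
    have h := keypt n m t (2 * π * p / (N + 1))
    simp only [cE] at h ⊢
    linear_combination (a n) * h
  have key : ∑ p ∈ Finset.range (N + 1),
      (f (2 * π * p / (N + 1)) * ((yi (t - 2 * π * p / (N + 1)) : ℝ) : ℂ) +
       Hf (2 * π * p / (N + 1)) * ((yr (t - 2 * π * p / (N + 1)) : ℝ) : ℂ))
      = ((N : ℂ) + 1) * ∑ n ∈ Finset.Icc (-(N : ℤ)) (N : ℤ),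
          (-Complex.I * ((Int.sign n : ℤ) : ℂ)) * a n
            * Complex.exp (Complex.I * (n : ℂ) * (t : ℂ)) := by
    rw [Finset.sum_congr rfl (fun p _ => step1 p), Finset.sum_comm, Finset.mul_sum]
    refine Finset.sum_congr rfl fun n hn => ?_
    rw [Finset.sum_comm]
    have hm : ∀ m ∈ Finset.range (N + 1),
        (∑ p ∈ Finset.range (N + 1),
          a n * ((-Complex.I / 2) * (1 + ((Int.sign n : ℤ) : ℂ)) * cE m t
              * cE (n - m) (2 * π * p / (N + 1))
            + (Complex.I / 2) * (1 - ((Int.sign n : ℤ) : ℂ)) * cE (-(m : ℤ)) t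
              * cE (n + m) (2 * π * p / (N + 1))))
        = a n * ((-Complex.I / 2) * (1 + ((Int.sign n : ℤ) : ℂ)) * cE m t * Dv N (n - m)
            + (Complex.I / 2) * (1 - ((Int.sign n : ℤ) : ℂ)) * cE (-(m : ℤ)) t * Dv N (n + m)) := by
      intro m _
      calc (∑ p ∈ Finset.range (N + 1),
            a n * ((-Complex.I / 2) * (1 + ((Int.sign n : ℤ) : ℂ)) * cE m t
                * cE (n - m) (2 * π * p / (N + 1))
              + (Complex.I / 2) * (1 - ((Int.sign n : ℤ) : ℂ)) * cE (-(m : ℤ)) t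
                * cE (n + m) (2 * π * p / (N + 1))))
          = (a n * ((-Complex.I / 2) * (1 + ((Int.sign n : ℤ) : ℂ)) * cE m t))
              * (∑ p ∈ Finset.range (N + 1), cE (n - m) (2 * π * p / (N + 1)))
            + (a n * ((Complex.I / 2) * (1 - ((Int.sign n : ℤ) : ℂ)) * cE (-(m : ℤ)) t))
              * (∑ p ∈ Finset.range (N + 1), cE (n + m) (2 * π * p / (N + 1))) := by
            rw [Finset.mul_sum, Finset.mul_sum, ← Finset.sum_add_distrib]
            exact Finset.sum_congr rfl fun p _ => by ring
        _ = _ := by rw [orthD, orthD]; ring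
    rw [Finset.sum_congr rfl hm, ← Finset.mul_sum]
    simp only [Finset.mem_Icc] at hn
    rw [innerSumLem N t n hn.1 hn.2]
    simp only [cE]
    ring
  rw [hHf t, key, ← mul_assoc, one_div, inv_mul_cancel₀ hN, one_mul]
end

section
/- Let N be a natural number and f(t) = Σ_{n=−N}^{N} a(n) e^{int} with a(n) ∈ ℂ (f may be complex-valued). Define y₁(t) = 1 + (1/2) Σ_{n=−N}^{−1} ( e^{i(n+N+1)t} + e^{int} ) and y₂(t) = e^{i(N+1)t} − i + Σ_{n=−N}^{−1} ( −(i/2) e^{int} + (i/2) e^{i(n+N+1)t} ). Then for all t ∈ ℝ, f(t) = (1/(N+1)) Σ_{p=0}^{N} [ f(t_p) y₁(t − t_p) + Hf(t_p) y₂(t − t_p) ], where t_p = 2πp/(N+1). -/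
open Real

noncomputable def EE (m : ℤ) (s : ℝ) : ℂ := Complex.exp (Complex.I * (m : ℂ) * (s : ℂ))
noncomputable def TT (N : ℕ) (p : ℕ) : ℝ := 2 * π * p / (N + 1)
noncomputable def Y1 (N : ℕ) (s : ℝ) : ℂ :=
  1 + (1 / 2) * ∑ m ∈ Finset.Icc (-(N : ℤ)) (-1 : ℤ), (EE (m + N + 1) s + EE m s)
noncomputable def Y2 (N : ℕ) (s : ℝ) : ℂ :=
  EE ((N : ℤ) + 1) s - Complex.I +
    ∑ m ∈ Finset.Icc (-(N : ℤ)) (-1 : ℤ),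
      (-(Complex.I / 2) * EE m s + (Complex.I / 2) * EE (m + N + 1) s)
noncomputable def Ssum (N : ℕ) (k : ℤ) : ℂ := ∑ p ∈ Finset.range (N + 1), EE k (TT N p)

lemma EE_split (n k : ℤ) (t u : ℝ) : EE n u * EE k (t - u) = EE k t * EE (n - k) u := by
  unfold EE
  rw [← Complex.exp_add, ← Complex.exp_add]
  congr 1
  push_cast
  ring

lemma Ssum_eq (N : ℕ) (m : ℤ) :
    Ssum N m = if ((N : ℤ) + 1) ∣ m then ((N : ℂ) + 1) else 0 := by
  have hζ : IsPrimitiveRoot (Complex.exp (2 * π * Complex.I / ((N : ℂ) + 1))) (N + 1) := by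
    have h := Complex.isPrimitiveRoot_exp (N + 1) (Nat.succ_ne_zero N)
    push_cast at h
    exact h
  set ζ : ℂ := Complex.exp (2 * π * Complex.I / ((N : ℂ) + 1)) with hζdef
  have hterm : ∀ p ∈ Finset.range (N + 1), EE m (TT N p) = (ζ ^ m) ^ p := by
    intro p _
    unfold EE TT
    rw [hζdef, ← Complex.exp_int_mul, ← Complex.exp_nat_mul]
    congr 1
    push_cast
    ring
  unfold Ssum
  rw [Finset.sum_congr rfl hterm]
  by_cases h : ((N : ℤ) + 1) ∣ m
  · have h1 : ζ ^ m = 1 := by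
      rw [hζ.zpow_eq_one_iff_dvd]
      exact_mod_cast h
    simp [h1, h]
  · have h1 : ζ ^ m ≠ 1 := by
      rw [Ne, hζ.zpow_eq_one_iff_dvd]
      intro hc; exact h (by exact_mod_cast hc)
    rw [geom_sum_eq h1]
    have h2 : (ζ ^ m) ^ (N + 1) = 1 := by
      rw [← zpow_natCast (ζ ^ m), ← zpow_mul, mul_comm, zpow_mul, zpow_natCast, hζ.pow_eq_one, one_zpow]
    rw [h2]
    simp [h]

lemma pull (N : ℕ) (b : ℂ) (k : ℤ) :
    ∑ p ∈ Finset.range (N + 1), b * EE k (TT N p) = b * Ssum N k := by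
  unfold Ssum; rw [Finset.mul_sum]

lemma swap_pull (N : ℕ) (S : Finset ℤ) (b : ℤ → ℂ) (k : ℤ → ℤ) :
    ∑ p ∈ Finset.range (N + 1), ∑ m ∈ S, b m * EE (k m) (TT N p)
      = ∑ m ∈ S, b m * Ssum N (k m) := by
  rw [Finset.sum_comm]
  exact Finset.sum_congr rfl fun m _ => by unfold Ssum; rw [Finset.mul_sum]

lemma Ssum_def' (N : ℕ) (k : ℤ) : ∑ p ∈ Finset.range (N + 1), EE k (TT N p) = Ssum N k := rfl

lemma dvd_cases (N : ℕ) (x : ℤ) (hd : ((N : ℤ) + 1) ∣ x)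
    (h2 : -(2 * (N : ℤ) + 1) ≤ x) (h3 : x ≤ 2 * (N : ℤ) + 1) :
    x = 0 ∨ x = (N : ℤ) + 1 ∨ x = -((N : ℤ) + 1) := by
  obtain ⟨k, hk⟩ := hd
  have hk1 : k = 0 ∨ k = 1 ∨ k = -1 := by
    by_contra h
    push_neg at h
    obtain ⟨h0, h1, h2'⟩ := h
    have hN : (0 : ℤ) ≤ N := Int.ofNat_nonneg N
    rcases le_or_gt 2 k with hge | hlt
    · nlinarith
    · have hle : k ≤ -2 := by omega
      nlinarith
  rcases hk1 with h | h | h <;> subst h <;> omega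

lemma core (N : ℕ) (t : ℝ) (n : ℤ) (hn : n ∈ Finset.Icc (-(N : ℤ)) (N : ℤ)) :
    ∑ p ∈ Finset.range (N + 1),
      (EE n (TT N p) * Y1 N (t - TT N p)
        + (-Complex.I * ((Int.sign n : ℤ) : ℂ)) * (EE n (TT N p) * Y2 N (t - TT N p)))
    = ((N : ℂ) + 1) * EE n t := by
  rw [Finset.mem_Icc] at hn
  have b1 : ∀ u : ℝ, EE n u * Y1 N (t - u)
      = EE n u + ∑ m ∈ Finset.Icc (-(N : ℤ)) (-1 : ℤ),
          ((1 / 2 : ℂ) * (EE (m + N + 1) t * EE (n - (m + N + 1)) u)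
            + (1 / 2 : ℂ) * (EE m t * EE (n - m) u)) := by
    intro u
    unfold Y1
    rw [mul_add, mul_one, Finset.mul_sum, Finset.mul_sum]
    congr 1
    apply Finset.sum_congr rfl
    intro m _
    rw [← EE_split n (m + N + 1) t u, ← EE_split n m t u]
    ring
  have b2 : ∀ u : ℝ, EE n u * Y2 N (t - u)
      = EE ((N : ℤ) + 1) t * EE (n - ((N : ℤ) + 1)) u - Complex.I * EE n u
        + ∑ m ∈ Finset.Icc (-(N : ℤ)) (-1 : ℤ),
            (-(Complex.I / 2) * (EE m t * EE (n - m) u)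
              + (Complex.I / 2) * (EE (m + N + 1) t * EE (n - (m + N + 1)) u)) := by
    intro u
    unfold Y2
    rw [mul_add, mul_sub, Finset.mul_sum]
    congr 1
    · rw [← EE_split n ((N : ℤ) + 1) t u]
      ring
    · apply Finset.sum_congr rfl
      intro m _
      rw [← EE_split n m t u, ← EE_split n (m + N + 1) t u]
      ring
  simp only [b1, b2, mul_add, mul_sub, Finset.mul_sum, Finset.sum_add_distrib,
    Finset.sum_sub_distrib]
  simp only [← mul_assoc]
  simp only [pull, swap_pull, Ssum_def']
  simp only [Ssum_eq]
  rcases lt_trichotomy n 0 with hneg | hzero | hpos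
  · -- n < 0
    rw [Int.sign_eq_neg_one_of_neg hneg]
    simp only [Int.cast_neg, Int.cast_one, mul_neg_one, neg_neg, neg_mul]
    have hnd : ¬ ((N : ℤ) + 1) ∣ n := by
      intro hd
      rcases dvd_cases N _ hd (by omega) (by omega) with h | h | h <;> omega
    have hnd2 : ¬ ((N : ℤ) + 1) ∣ (n - ((N : ℤ) + 1)) := by
      intro hd
      rcases dvd_cases N _ hd (by omega) (by omega) with h | h | h <;> omega
    have hmem : n ∈ Finset.Icc (-(N : ℤ)) (-1 : ℤ) :=
      Finset.mem_Icc.mpr ⟨by omega, by omega⟩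
    have t1 : ∑ x ∈ Finset.Icc (-(N : ℤ)) (-1 : ℤ),
        1 / 2 * EE (x + ↑N + 1) t * (if ((N : ℤ) + 1) ∣ n - (x + ↑N + 1) then ((N : ℂ) + 1) else 0)
        = 1 / 2 * EE (n + (N : ℤ) + 1) t * ((N : ℂ) + 1) := by
      rw [Finset.sum_eq_single_of_mem _ hmem (fun b hb hne => by
        rw [Finset.mem_Icc] at hb
        rw [if_neg, mul_zero]
        intro hd
        rcases dvd_cases N _ hd (by omega) (by omega) with h | h | h <;> omega)]
      rw [show n - (n + ↑N + 1) = -((N : ℤ) + 1) by ring, if_pos ⟨-1, by ring⟩]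
    have t2 : ∑ x ∈ Finset.Icc (-(N : ℤ)) (-1 : ℤ),
        1 / 2 * EE x t * (if ((N : ℤ) + 1) ∣ n - x then ((N : ℂ) + 1) else 0)
        = 1 / 2 * EE n t * ((N : ℂ) + 1) := by
      rw [Finset.sum_eq_single_of_mem _ hmem (fun b hb hne => by
        rw [Finset.mem_Icc] at hb
        rw [if_neg, mul_zero]
        intro hd
        rcases dvd_cases N _ hd (by omega) (by omega) with h | h | h <;> omega)]
      rw [show n - n = 0 by ring, if_pos (dvd_zero _)]
    have t3 : ∑ x ∈ Finset.Icc (-(N : ℤ)) (-1 : ℤ),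
        Complex.I * -(Complex.I / 2) * EE x t * (if ((N : ℤ) + 1) ∣ n - x then ((N : ℂ) + 1) else 0)
        = Complex.I * -(Complex.I / 2) * EE n t * ((N : ℂ) + 1) := by
      rw [Finset.sum_eq_single_of_mem _ hmem (fun b hb hne => by
        rw [Finset.mem_Icc] at hb
        rw [if_neg, mul_zero]
        intro hd
        rcases dvd_cases N _ hd (by omega) (by omega) with h | h | h <;> omega)]
      rw [show n - n = 0 by ring, if_pos (dvd_zero _)]
    have t4 : ∑ x ∈ Finset.Icc (-(N : ℤ)) (-1 : ℤ),
        Complex.I * (Complex.I / 2) * EE (x + ↑N + 1) t * (if ((N : ℤ) + 1) ∣ n - (x + ↑N + 1) then ((N : ℂ) + 1) else 0)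
        = Complex.I * (Complex.I / 2) * EE (n + (N : ℤ) + 1) t * ((N : ℂ) + 1) := by
      rw [Finset.sum_eq_single_of_mem _ hmem (fun b hb hne => by
        rw [Finset.mem_Icc] at hb
        rw [if_neg, mul_zero]
        intro hd
        rcases dvd_cases N _ hd (by omega) (by omega) with h | h | h <;> omega)]
      rw [show n - (n + ↑N + 1) = -((N : ℤ) + 1) by ring, if_pos ⟨-1, by ring⟩]
    rw [t1, t2, t3, t4, if_neg hnd, if_neg hnd2]
    linear_combination (((N : ℂ) + 1) / 2 * EE (n + (N : ℤ) + 1) t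
      - ((N : ℂ) + 1) / 2 * EE n t) * Complex.I_mul_I
  · -- n = 0
    subst hzero
    simp only [Int.sign_zero, Int.cast_zero, mul_zero, zero_mul, zero_add, add_zero, zero_sub, sub_zero]
    have s1 : ∑ x ∈ Finset.Icc (-(N : ℤ)) (-1 : ℤ),
        1 / 2 * EE (x + ↑N + 1) t * (if ((N : ℤ) + 1) ∣ -(x + ↑N + 1) then ((N : ℂ) + 1) else 0) = 0 :=
      Finset.sum_eq_zero fun m hm => by
        rw [Finset.mem_Icc] at hm
        rw [if_neg, mul_zero]
        intro hd
        rcases dvd_cases N _ hd (by omega) (by omega) with h | h | h <;> omega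
    have s2 : ∑ x ∈ Finset.Icc (-(N : ℤ)) (-1 : ℤ),
        1 / 2 * EE x t * (if ((N : ℤ) + 1) ∣ -x then ((N : ℂ) + 1) else 0) = 0 :=
      Finset.sum_eq_zero fun m hm => by
        rw [Finset.mem_Icc] at hm
        rw [if_neg, mul_zero]
        intro hd
        rcases dvd_cases N _ hd (by omega) (by omega) with h | h | h <;> omega
    rw [s1, s2]
    have e0 : EE 0 t = 1 := by unfold EE; simp
    simp [e0]
  · -- n > 0
    rw [Int.sign_eq_one_of_pos hpos]
    simp only [Int.cast_one, mul_one]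
    have hnd : ¬ ((N : ℤ) + 1) ∣ n := by
      intro hd
      rcases dvd_cases N _ hd (by omega) (by omega) with h | h | h <;> omega
    have hnd2 : ¬ ((N : ℤ) + 1) ∣ (n - ((N : ℤ) + 1)) := by
      intro hd
      rcases dvd_cases N _ hd (by omega) (by omega) with h | h | h <;> omega
    have hmem : n - ((N : ℤ) + 1) ∈ Finset.Icc (-(N : ℤ)) (-1 : ℤ) :=
      Finset.mem_Icc.mpr ⟨by omega, by omega⟩
    have t1 : ∑ x ∈ Finset.Icc (-(N : ℤ)) (-1 : ℤ),
        1 / 2 * EE (x + ↑N + 1) t * (if ((N : ℤ) + 1) ∣ n - (x + ↑N + 1) then ((N : ℂ) + 1) else 0)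
        = 1 / 2 * EE n t * ((N : ℂ) + 1) := by
      rw [Finset.sum_eq_single_of_mem _ hmem (fun b hb hne => by
        rw [Finset.mem_Icc] at hb
        rw [if_neg, mul_zero]
        intro hd
        rcases dvd_cases N _ hd (by omega) (by omega) with h | h | h <;> omega)]
      rw [show n - ((N : ℤ) + 1) + ↑N + 1 = n by ring,
        show n - n = 0 by ring, if_pos (dvd_zero _)]
    have t2 : ∑ x ∈ Finset.Icc (-(N : ℤ)) (-1 : ℤ),
        1 / 2 * EE x t * (if ((N : ℤ) + 1) ∣ n - x then ((N : ℂ) + 1) else 0)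
        = 1 / 2 * EE (n - ((N : ℤ) + 1)) t * ((N : ℂ) + 1) := by
      rw [Finset.sum_eq_single_of_mem _ hmem (fun b hb hne => by
        rw [Finset.mem_Icc] at hb
        rw [if_neg, mul_zero]
        intro hd
        rcases dvd_cases N _ hd (by omega) (by omega) with h | h | h <;> omega)]
      rw [show n - (n - ((N : ℤ) + 1)) = (N : ℤ) + 1 by ring, if_pos ⟨1, by ring⟩]
    have t3 : ∑ x ∈ Finset.Icc (-(N : ℤ)) (-1 : ℤ),
        -Complex.I * -(Complex.I / 2) * EE x t * (if ((N : ℤ) + 1) ∣ n - x then ((N : ℂ) + 1) else 0)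
        = -Complex.I * -(Complex.I / 2) * EE (n - ((N : ℤ) + 1)) t * ((N : ℂ) + 1) := by
      rw [Finset.sum_eq_single_of_mem _ hmem (fun b hb hne => by
        rw [Finset.mem_Icc] at hb
        rw [if_neg, mul_zero]
        intro hd
        rcases dvd_cases N _ hd (by omega) (by omega) with h | h | h <;> omega)]
      rw [show n - (n - ((N : ℤ) + 1)) = (N : ℤ) + 1 by ring, if_pos ⟨1, by ring⟩]
    have t4 : ∑ x ∈ Finset.Icc (-(N : ℤ)) (-1 : ℤ),
        -Complex.I * (Complex.I / 2) * EE (x + ↑N + 1) t * (if ((N : ℤ) + 1) ∣ n - (x + ↑N + 1) then ((N : ℂ) + 1) else 0)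
        = -Complex.I * (Complex.I / 2) * EE n t * ((N : ℂ) + 1) := by
      rw [Finset.sum_eq_single_of_mem _ hmem (fun b hb hne => by
        rw [Finset.mem_Icc] at hb
        rw [if_neg, mul_zero]
        intro hd
        rcases dvd_cases N _ hd (by omega) (by omega) with h | h | h <;> omega)]
      rw [show n - ((N : ℤ) + 1) + ↑N + 1 = n by ring,
        show n - n = 0 by ring, if_pos (dvd_zero _)]
    rw [t1, t2, t3, t4, if_neg hnd, if_neg hnd2]
    linear_combination (((N : ℂ) + 1) / 2 * EE (n - ((N : ℤ) + 1)) t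
      - ((N : ℂ) + 1) / 2 * EE n t) * Complex.I_mul_I

/-- Example 3.5, formula (21): a (possibly complex-valued) trigonometric polynomial
reconstructed from the samples of itself and of its circular Hilbert transform. -/
theorem complex_signal_from_self_and_hilbert_samples
    (N : ℕ) (a : ℤ → ℂ)
    (f Hf : ℝ → ℂ)
    (hf : ∀ t : ℝ, f t = ∑ n ∈ Finset.Icc (-(N : ℤ)) (N : ℤ),
      a n * Complex.exp (Complex.I * (n : ℂ) * (t : ℂ)))
    (hHf : ∀ t : ℝ, Hf t = ∑ n ∈ Finset.Icc (-(N : ℤ)) (N : ℤ),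
      (-Complex.I * ((Int.sign n : ℤ) : ℂ)) * a n * Complex.exp (Complex.I * (n : ℂ) * (t : ℂ)))
    (y₁ y₂ : ℝ → ℂ)
    (hy₁ : ∀ t : ℝ, y₁ t = 1 + (1 / 2) * ∑ n ∈ Finset.Icc (-(N : ℤ)) (-1 : ℤ),
      (Complex.exp (Complex.I * ((n : ℂ) + (N : ℂ) + 1) * (t : ℂ)) +
       Complex.exp (Complex.I * (n : ℂ) * (t : ℂ))))
    (hy₂ : ∀ t : ℝ, y₂ t = Complex.exp (Complex.I * ((N : ℂ) + 1) * (t : ℂ)) - Complex.I +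
      ∑ n ∈ Finset.Icc (-(N : ℤ)) (-1 : ℤ),
        (-(Complex.I / 2) * Complex.exp (Complex.I * (n : ℂ) * (t : ℂ)) +
         (Complex.I / 2) * Complex.exp (Complex.I * ((n : ℂ) + (N : ℂ) + 1) * (t : ℂ)))) :
    ∀ t : ℝ, f t = (1 / ((N : ℂ) + 1)) * ∑ p ∈ Finset.range (N + 1),
      (f (2 * π * p / (N + 1)) * y₁ (t - 2 * π * p / (N + 1)) +
       Hf (2 * π * p / (N + 1)) * y₂ (t - 2 * π * p / (N + 1))) := by
  have hNe : ((N : ℂ) + 1) ≠ 0 := by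
    have h : ((N + 1 : ℕ) : ℂ) ≠ 0 := Nat.cast_ne_zero.mpr (Nat.succ_ne_zero N)
    push_cast at h; exact h
  have hfE : ∀ u : ℝ, f u = ∑ n ∈ Finset.Icc (-(N : ℤ)) (N : ℤ), a n * EE n u := hf
  have hHfE : ∀ u : ℝ, Hf u = ∑ n ∈ Finset.Icc (-(N : ℤ)) (N : ℤ),
      (-Complex.I * ((Int.sign n : ℤ) : ℂ)) * a n * EE n u := hHf
  have hy1' : ∀ s : ℝ, y₁ s = Y1 N s := by
    intro s
    rw [hy₁ s]
    unfold Y1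
    congr 1
    congr 1
    apply Finset.sum_congr rfl
    intro m _
    unfold EE
    push_cast
    ring_nf
  have hy2' : ∀ s : ℝ, y₂ s = Y2 N s := by
    intro s
    rw [hy₂ s]
    unfold Y2
    congr 1
    · unfold EE
      push_cast
      ring_nf
    · apply Finset.sum_congr rfl
      intro m _
      unfold EE
      push_cast
      ring_nf
  intro t
  have step : ∀ p ∈ Finset.range (N + 1),
      f (2 * π * p / (N + 1)) * y₁ (t - 2 * π * p / (N + 1)) +
        Hf (2 * π * p / (N + 1)) * y₂ (t - 2 * π * p / (N + 1))
      = ∑ n ∈ Finset.Icc (-(N : ℤ)) (N : ℤ),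
          a n * (EE n (TT N p) * Y1 N (t - TT N p)
            + (-Complex.I * ((Int.sign n : ℤ) : ℂ)) * (EE n (TT N p) * Y2 N (t - TT N p))) := by
    intro p _
    rw [show (2 * π * (p : ℝ) / ((N : ℝ) + 1)) = TT N p from rfl]
    rw [hfE, hHfE, hy1', hy2']
    rw [Finset.sum_mul, Finset.sum_mul, ← Finset.sum_add_distrib]
    apply Finset.sum_congr rfl
    intro n _
    ring
  rw [hfE t, Finset.sum_congr rfl step, Finset.sum_comm]
  have step2 : ∀ n ∈ Finset.Icc (-(N : ℤ)) (N : ℤ),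
      (∑ p ∈ Finset.range (N + 1),
        a n * (EE n (TT N p) * Y1 N (t - TT N p)
          + (-Complex.I * ((Int.sign n : ℤ) : ℂ)) * (EE n (TT N p) * Y2 N (t - TT N p))))
      = a n * (((N : ℂ) + 1) * EE n t) := by
    intro n hn
    rw [← Finset.mul_sum, core N t n hn]
  rw [Finset.sum_congr rfl step2, Finset.mul_sum]
  apply Finset.sum_congr rfl
  intro n _
  field_simp
end

section
/- Under the MCI setup with H_n invertible for every n ∈ I_1, let a : ℤ → ℂ satisfy Σ_{n∈ℤ} |a(n) b_m(n)| < ∞ for each m = 1,…,M, and define the channel outputs g_m(t) = Σ_{n∈ℤ} a(n) b_m(n) e^{int}. Let c : ℤ → ℂ be the Fourier coefficients of the interpolant T_N f, i.e. c(n) = (1/L) Σ_{j=1}^{M} Σ_{p=0}^{L−1} g_j(t_p) e^{−in t_p} r_j(n) for n ∈ I^N and c(n) = 0 for n ∉ I^N. Then the interpolation is consistent: for every m ∈ {1,…,M} and every k ∈ ℤ, Σ_{n∈I^N} c(n) b_m(n) e^{in·2πk/L} = g_m(2πk/L); that is, filtering the interpolant through the m-th channel and resampling reproduces the original samples g_m(2πk/L).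 -/
open Real

lemma sum_Icc_int (N₁ : ℤ) (c : ℕ) (f : ℤ → ℂ) :
    ∑ n ∈ Finset.Icc N₁ (N₁ + c - 1), f n = ∑ i ∈ Finset.range c, f (N₁ + i) := by
  apply Finset.sum_nbij' (fun n => (n - N₁).toNat) (fun i => N₁ + (i : ℤ))
  · intro n hn; simp only [Finset.mem_Icc] at hn; simp only [Finset.mem_range]; omega
  · intro i hi; simp only [Finset.mem_range] at hi; simp only [Finset.mem_Icc]; omega
  · intro n hn; simp only [Finset.mem_Icc] at hn; omega
  · intro i hi; simp only [Finset.mem_range] at hi; omega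
  · intro n hn; simp only [Finset.mem_Icc] at hn; congr 1; omega

lemma sum_range_mul (L M : ℕ) (f : ℕ → ℂ) :
    ∑ i ∈ Finset.range (L * M), f i
      = ∑ κ ∈ Finset.range M, ∑ u ∈ Finset.range L, f (u + κ * L) := by
  induction M with
  | zero => simp
  | succ m ih =>
    rw [Finset.sum_range_succ, ← ih, Nat.mul_succ]
    have h2 : ∑ i ∈ Finset.Ico (L*m) (L*m+L), f i = ∑ u ∈ Finset.range L, f (u + m*L) := by
      rw [Finset.sum_Ico_eq_sum_range, Nat.add_sub_cancel_left]
      exact Finset.sum_congr rfl fun u _ => by rw [Nat.add_comm, Nat.mul_comm]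
    rw [← h2, Finset.range_eq_Ico,
      ← Finset.sum_Ico_consecutive f (Nat.zero_le (L*m)) (Nat.le_add_right _ _), Finset.range_eq_Ico]

lemma geom_exp (L : ℕ) (hL : 0 < L) (N₁ d : ℤ) :
    ∑ u ∈ Finset.range L,
        Complex.exp (Complex.I * ((N₁ : ℂ) + (u : ℂ)) * (2 * (π : ℂ) * d / L))
      = if (L : ℤ) ∣ d then (L : ℂ) else 0 := by
  have hL' : (L : ℂ) ≠ 0 := Nat.cast_ne_zero.mpr hL.ne'
  by_cases hd : (L : ℤ) ∣ d
  · obtain ⟨q, hq⟩ := hd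
    rw [if_pos ⟨q, hq⟩]
    have hterm : ∀ u : ℕ,
        Complex.exp (Complex.I * ((N₁ : ℂ) + (u : ℂ)) * (2 * (π : ℂ) * d / L)) = 1 := by
      intro u
      have h1 : Complex.I * ((N₁ : ℂ) + (u : ℂ)) * (2 * (π : ℂ) * d / L)
          = (((N₁ + u) * q : ℤ) : ℂ) * (2 * (π : ℂ) * Complex.I) := by
        rw [hq]; push_cast; field_simp
      rw [h1, Complex.exp_int_mul_two_pi_mul_I]
    simp [hterm]
  · rw [if_neg hd]
    set w := Complex.exp (Complex.I * (2 * (π : ℂ) * d / L)) with hw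
    have hterm : ∀ u : ℕ,
        Complex.exp (Complex.I * ((N₁ : ℂ) + (u : ℂ)) * (2 * (π : ℂ) * d / L))
          = Complex.exp (Complex.I * (N₁ : ℂ) * (2 * (π : ℂ) * d / L)) * w ^ u := by
      intro u
      rw [hw, ← Complex.exp_nat_mul, ← Complex.exp_add]
      congr 1
      ring
    rw [Finset.sum_congr rfl fun u _ => hterm u, ← Finset.mul_sum]
    have hw1 : w ≠ 1 := by
      intro h
      rw [hw, Complex.exp_eq_one_iff] at h
      obtain ⟨n, hn⟩ := h
      apply hd
      have hd' : (d : ℂ) = (n : ℂ) * (L : ℂ) := by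
        have hI : Complex.I ≠ 0 := Complex.I_ne_zero
        have hπ : (π : ℂ) ≠ 0 := Complex.ofReal_ne_zero.mpr Real.pi_ne_zero
        field_simp at hn
        have h2 : (2 * (π : ℂ) * Complex.I) * (d : ℂ)
            = (2 * (π : ℂ) * Complex.I) * ((n : ℂ) * (L : ℂ)) := by linear_combination (2 * (π : ℂ) * Complex.I) * hn
        exact mul_left_cancel₀ (by simp [hπ, hI] : (2 * (π : ℂ) * Complex.I) ≠ 0) h2
      have : d = n * L := by exact_mod_cast hd'
      exact ⟨n, by rw [this]; ring⟩
    have hwL : w ^ L = 1 := by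
      rw [hw, ← Complex.exp_nat_mul]
      have h1 : (L : ℂ) * (Complex.I * (2 * (π : ℂ) * d / L)) = (d : ℂ) * (2 * (π : ℂ) * Complex.I) := by
        field_simp
      rw [h1, Complex.exp_int_mul_two_pi_mul_I]
    rw [geom_sum_eq hw1, hwL, sub_self, zero_div, mul_zero]

/-- Theorem 4.1 (interpolation consistency): for a not necessarily bandlimited
signal with Fourier coefficients `a`, filtering the MCI interpolant `T_N f`
through the `m`-th channel and resampling at the points `2πk/L` reproduces the
original samples `g_m(2πk/L)`. -/
theorem mci_interpolation_consistency
    (N₁ N₂ : ℤ) (M L : ℕ) (hM : 0 < M) (hL : 0 < L)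
    (hNML : N₂ - N₁ + 1 = (L : ℤ) * (M : ℤ))
    (b : Fin M → ℤ → ℂ)
    (H : ℤ → Matrix (Fin M) (Fin M) ℂ)
    (hH : ∀ n : ℤ, H n = Matrix.of fun j k : Fin M => b k (n + (j : ℤ) * (L : ℤ)))
    (hinv : ∀ n : ℤ, N₁ ≤ n → n ≤ N₁ + (L : ℤ) - 1 → IsUnit (H n))
    (r : Fin M → ℤ → ℂ)
    (hr1 : ∀ (m : Fin M) (n : ℤ), N₁ ≤ n → n ≤ N₁ + (L : ℤ) - 1 →
      ∀ k : Fin M, r m (n + (k : ℤ) * (L : ℤ)) = (H n)⁻¹ m k)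
    (hr0 : ∀ (m : Fin M) (n : ℤ), n < N₁ ∨ N₂ < n → r m n = 0)
    (a : ℤ → ℂ)
    (hsum : ∀ m : Fin M, Summable fun n : ℤ => ‖a n * b m n‖)
    (g : Fin M → ℝ → ℂ)
    (hg : ∀ (m : Fin M) (t : ℝ),
      g m t = ∑' n : ℤ, a n * b m n * Complex.exp (Complex.I * (n : ℂ) * (t : ℂ)))
    (c : ℤ → ℂ)
    (hc1 : ∀ n ∈ Finset.Icc N₁ N₂,
      c n = (1 / (L : ℂ)) * ∑ j : Fin M, ∑ p ∈ Finset.range L,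
        g j (2 * π * p / L) * Complex.exp (-Complex.I * (n : ℂ) * ((2 * π * p / L : ℝ) : ℂ)) *
          r j n)
    (hc0 : ∀ n : ℤ, n ∉ Finset.Icc N₁ N₂ → c n = 0) :
    ∀ (m : Fin M) (k : ℤ),
      ∑ n ∈ Finset.Icc N₁ N₂,
        c n * b m n * Complex.exp (Complex.I * (n : ℂ) * ((2 * π * k / L : ℝ) : ℂ)) =
      g m (2 * π * k / L) := by
  intro m k
  have hL' : (L : ℂ) ≠ 0 := Nat.cast_ne_zero.mpr hL.ne'
  have hLZ : (0 : ℤ) < (L : ℤ) := by exact_mod_cast hL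
  -- the distinguished sampling index
  set p₀ : ℕ := (k % (L : ℤ)).toNat with hp₀
  have hmod := Int.emod_nonneg k hLZ.ne'
  have hmodlt := Int.emod_lt_of_pos k hLZ
  have hp₀cast : ((p₀ : ℤ)) = k % (L : ℤ) := Int.toNat_of_nonneg hmod
  have hp₀L : p₀ < L := by omega
  have hediv := Int.mul_ediv_add_emod k (L : ℤ)
  have hdvd₀ : (L : ℤ) ∣ (k - (p₀ : ℤ)) := ⟨k / (L : ℤ), by omega⟩
  -- uniqueness of p₀ among p < L
  have huniq : ∀ p : ℕ, p < L → (L : ℤ) ∣ (k - (p : ℤ)) → p = p₀ := by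
    intro p hp hdvd
    have h1 : (L : ℤ) ∣ ((p : ℤ) - (p₀ : ℤ)) := by
      have := dvd_sub hdvd₀ hdvd
      simpa using this
    obtain ⟨t, ht⟩ := h1
    have ht0 : t = 0 := by
      rcases lt_trichotomy t 0 with h | h | h
      · nlinarith [hp₀cast, hmod, hmodlt, (by exact_mod_cast hp : (p : ℤ) < L)]
      · exact h
      · nlinarith [hp₀cast, hmod, hmodlt, (by exact_mod_cast hp : (p : ℤ) < L)]
    rw [ht0, mul_zero] at ht
    have : (p : ℤ) = (p₀ : ℤ) := by omega
    exact_mod_cast this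
  -- the matrix identity: channels invert correctly on the base interval
  have hmat : ∀ (j : Fin M) (ν : ℤ), N₁ ≤ ν → ν ≤ N₁ + (L : ℤ) - 1 →
      ∑ κ ∈ Finset.range M, r j (ν + (κ : ℤ) * L) * b m (ν + (κ : ℤ) * L)
        = if j = m then 1 else 0 := by
    intro j ν h1 h2
    rw [← Fin.sum_univ_eq_sum_range (fun κ => r j (ν + (κ : ℤ) * L) * b m (ν + (κ : ℤ) * L)) M]
    have hterm : ∀ i : Fin M,
        r j (ν + ((i : ℕ) : ℤ) * L) * b m (ν + ((i : ℕ) : ℤ) * L)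
          = (H ν)⁻¹ j i * (H ν) i m := by
      intro i
      rw [hr1 j ν h1 h2 i, hH ν]
      rfl
    rw [Finset.sum_congr rfl fun i _ => hterm i, ← Matrix.mul_apply,
      Matrix.nonsing_inv_mul _ ((Matrix.isUnit_iff_isUnit_det _).mp (hinv ν h1 h2)),
      Matrix.one_apply]
  -- the key inner sum computation
  have key : ∀ (j : Fin M) (p : ℕ), p < L →
      ∑ n ∈ Finset.Icc N₁ N₂,
        1 / (L : ℂ) * (g j (2 * π * p / L)
            * Complex.exp (-Complex.I * (n : ℂ) * ((2 * π * p / L : ℝ) : ℂ)) * r j n)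
          * b m n * Complex.exp (Complex.I * (n : ℂ) * ((2 * π * k / L : ℝ) : ℂ))
        = if j = m ∧ (L : ℤ) ∣ (k - (p : ℤ)) then g j (2 * π * p / L) else 0 := by
    intro j p hp
    have hterm : ∀ n : ℤ,
        1 / (L : ℂ) * (g j (2 * π * p / L)
            * Complex.exp (-Complex.I * (n : ℂ) * ((2 * π * p / L : ℝ) : ℂ)) * r j n)
          * b m n * Complex.exp (Complex.I * (n : ℂ) * ((2 * π * k / L : ℝ) : ℂ))
        = 1 / (L : ℂ) * g j (2 * π * p / L)
          * (r j n * b m n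
            * Complex.exp (Complex.I * (n : ℂ) * (2 * (π:ℂ) * ((k - (p:ℤ) : ℤ) : ℂ) / L))) := by
      intro n
      have hexp : Complex.exp (-Complex.I * (n : ℂ) * ((2 * π * p / L : ℝ) : ℂ))
          * Complex.exp (Complex.I * (n : ℂ) * ((2 * π * k / L : ℝ) : ℂ))
          = Complex.exp (Complex.I * (n : ℂ) * (2 * (π:ℂ) * ((k - (p:ℤ) : ℤ) : ℂ) / L)) := by
        rw [← Complex.exp_add]
        congr 1
        push_cast
        ring
      calc 1 / (L : ℂ) * (g j (2 * π * p / L)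
            * Complex.exp (-Complex.I * (n : ℂ) * ((2 * π * p / L : ℝ) : ℂ)) * r j n)
          * b m n * Complex.exp (Complex.I * (n : ℂ) * ((2 * π * k / L : ℝ) : ℂ))
          = 1 / (L : ℂ) * g j (2 * π * p / L) * (r j n * b m n
              * (Complex.exp (-Complex.I * (n : ℂ) * ((2 * π * p / L : ℝ) : ℂ))
                * Complex.exp (Complex.I * (n : ℂ) * ((2 * π * k / L : ℝ) : ℂ)))) := by ring
        _ = _ := by rw [hexp]
    rw [Finset.sum_congr rfl fun n _ => hterm n, ← Finset.mul_sum]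
    -- now compute the inner sum over Icc
    have hIcc : N₂ = N₁ + ((L * M : ℕ) : ℤ) - 1 := by push_cast; omega
    rw [hIcc, sum_Icc_int, sum_range_mul, Finset.sum_comm]
    have hinner : ∀ u ∈ Finset.range L,
        ∑ κ ∈ Finset.range M,
          (fun i : ℕ => r j (N₁ + (i : ℤ)) * b m (N₁ + (i : ℤ))
            * Complex.exp (Complex.I * ((N₁ + (i : ℤ) : ℤ) : ℂ)
              * (2 * (π:ℂ) * ((k - (p:ℤ) : ℤ) : ℂ) / L))) (u + κ * L)
        = Complex.exp (Complex.I * ((N₁ : ℂ) + (u : ℂ)) * (2 * (π:ℂ) * ((k - (p:ℤ) : ℤ) : ℂ) / L))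
          * (if j = m then 1 else 0) := by
      intro u hu
      simp only [Finset.mem_range] at hu
      have hbd1 : N₁ ≤ N₁ + (u : ℤ) := by omega
      have hbd2 : N₁ + (u : ℤ) ≤ N₁ + (L : ℤ) - 1 := by omega
      have hκ : ∀ κ ∈ Finset.range M,
          r j (N₁ + ((u + κ * L : ℕ) : ℤ)) * b m (N₁ + ((u + κ * L : ℕ) : ℤ))
            * Complex.exp (Complex.I * ((N₁ + ((u + κ * L : ℕ) : ℤ) : ℤ) : ℂ)
              * (2 * (π:ℂ) * ((k - (p:ℤ) : ℤ) : ℂ) / L))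
          = (r j ((N₁ + (u:ℤ)) + (κ : ℤ) * L) * b m ((N₁ + (u:ℤ)) + (κ : ℤ) * L))
            * Complex.exp (Complex.I * ((N₁ : ℂ) + (u : ℂ))
              * (2 * (π:ℂ) * ((k - (p:ℤ) : ℤ) : ℂ) / L)) := by
        intro κ hκm
        have harg : N₁ + ((u + κ * L : ℕ) : ℤ) = (N₁ + (u:ℤ)) + (κ : ℤ) * L := by push_cast; ring
        rw [harg]
        have hsplit : Complex.exp (Complex.I * (((N₁ + (u:ℤ)) + (κ : ℤ) * L : ℤ) : ℂ)
              * (2 * (π:ℂ) * ((k - (p:ℤ) : ℤ) : ℂ) / L))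
            = Complex.exp (Complex.I * ((N₁ : ℂ) + (u : ℂ))
                * (2 * (π:ℂ) * ((k - (p:ℤ) : ℤ) : ℂ) / L))
              * Complex.exp ((((κ : ℤ) * (k - (p:ℤ)) : ℤ) : ℂ) * (2 * (π:ℂ) * Complex.I)) := by
          rw [← Complex.exp_add]
          congr 1
          push_cast
          field_simp
        rw [hsplit, Complex.exp_int_mul_two_pi_mul_I, mul_one]
      rw [Finset.sum_congr rfl hκ, ← Finset.sum_mul, hmat j (N₁ + (u:ℤ)) hbd1 hbd2]
      ring
    rw [Finset.sum_congr rfl hinner, ← Finset.sum_mul,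
      geom_exp L hL N₁ (k - (p:ℤ))]
    by_cases hjm : j = m
    · by_cases hdvd : (L : ℤ) ∣ (k - (p : ℤ))
      · rw [if_pos hdvd, if_pos hjm, if_pos ⟨hjm, hdvd⟩]
        field_simp
      · rw [if_neg hdvd, if_neg (show ¬(j = m ∧ (L : ℤ) ∣ (k - (p : ℤ))) from fun h => hdvd h.2)]
        ring
    · rw [if_neg hjm, if_neg (show ¬(j = m ∧ (L : ℤ) ∣ (k - (p : ℤ))) from fun h => hjm h.1)]
      ring
  -- rewrite the left-hand side using hc1 and swap sums
  have step1 : ∑ n ∈ Finset.Icc N₁ N₂,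
        c n * b m n * Complex.exp (Complex.I * (n : ℂ) * ((2 * π * k / L : ℝ) : ℂ))
      = ∑ j : Fin M, ∑ p ∈ Finset.range L, ∑ n ∈ Finset.Icc N₁ N₂,
          1 / (L : ℂ) * (g j (2 * π * p / L)
              * Complex.exp (-Complex.I * (n : ℂ) * ((2 * π * p / L : ℝ) : ℂ)) * r j n)
            * b m n * Complex.exp (Complex.I * (n : ℂ) * ((2 * π * k / L : ℝ) : ℂ)) := by
    rw [Finset.sum_congr rfl fun n hn => by rw [hc1 n hn]]
    simp only [Finset.mul_sum, Finset.sum_mul]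
    rw [Finset.sum_comm]
    exact Finset.sum_congr rfl fun j _ => Finset.sum_comm
  rw [step1]
  rw [Finset.sum_congr rfl fun j _ => Finset.sum_congr rfl fun p hp =>
    key j p (Finset.mem_range.mp hp)]
  -- collapse the double sum of ifs
  have step2 : ∑ j : Fin M, ∑ p ∈ Finset.range L,
      (if j = m ∧ (L : ℤ) ∣ (k - (p : ℤ)) then g j (2 * π * p / L) else 0)
      = g m (2 * π * (p₀:ℕ) / L) := by
    rw [Finset.sum_eq_single m]
    · rw [Finset.sum_eq_single p₀]
      · rw [if_pos ⟨rfl, hdvd₀⟩]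
      · intro p hp hne
        rw [if_neg]
        rintro ⟨-, hdvd⟩
        exact hne (huniq p (Finset.mem_range.mp hp) hdvd)
      · intro habs
        exact absurd (Finset.mem_range.mpr hp₀L) habs
    · intro j _ hne
      exact Finset.sum_eq_zero fun p _ => if_neg (by tauto)
    · intro habs
      exact absurd (Finset.mem_univ m) habs
  rw [step2]
  -- periodicity: g m at 2πp₀/L equals g m at 2πk/L
  rw [hg, hg]
  apply tsum_congr
  intro n
  congr 1
  obtain ⟨q, hq⟩ := hdvd₀
  have hkC : ((k : ℤ) : ℂ) = (((p₀ : ℕ)) : ℂ) + (L : ℂ) * ((q : ℤ) : ℂ) := by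
    have h : (k : ℤ) = (p₀ : ℤ) + (L : ℤ) * q := by omega
    exact_mod_cast congrArg (fun z : ℤ => (z : ℂ)) h
  have hsplit : Complex.exp (Complex.I * (n : ℂ) * ((2 * π * (p₀:ℕ) / L : ℝ) : ℂ))
      = Complex.exp (Complex.I * (n : ℂ) * ((2 * π * (k:ℤ) / L : ℝ) : ℂ))
        * Complex.exp ((((-n) * q : ℤ) : ℂ) * (2 * (π:ℂ) * Complex.I)) := by
    rw [← Complex.exp_add]
    congr 1
    push_cast
    rw [hkC]
    field_simp
    ring
  rw [hsplit, Complex.exp_int_mul_two_pi_mul_I, mul_one]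
end

section
/- Under the MCI setup with H_n invertible for every n ∈ I_1, the functions r_m and b_m satisfy: (i) Σ_{m=1}^{M} r_m(n) b_m(n) = 1 for every n ∈ I^N; and (ii) Σ_{m=1}^{M} r_m(n₁) b_m(n₂) = 0 for all n₁, n₂ ∈ I^N such that n₁ − n₂ is a nonzero integer multiple of L. -/
/-- Lemma 4.1: biorthogonality relations between the coefficients `r_m` and the
channel multipliers `b_m`: `Σ_m r_m(n) b_m(n) = 1` on `I^N`, and
`Σ_m r_m(n₁) b_m(n₂) = 0` whenever `n₁, n₂ ∈ I^N` differ by a nonzero multiple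
of `L`. -/
theorem mci_rm_bm_biorthogonality
    (N₁ N₂ : ℤ) (M L : ℕ) (hM : 0 < M) (hL : 0 < L)
    (hNML : N₂ - N₁ + 1 = (L : ℤ) * (M : ℤ))
    (b : Fin M → ℤ → ℂ)
    (H : ℤ → Matrix (Fin M) (Fin M) ℂ)
    (hH : ∀ n : ℤ, H n = Matrix.of fun j k : Fin M => b k (n + (j : ℤ) * (L : ℤ)))
    (hinv : ∀ n : ℤ, N₁ ≤ n → n ≤ N₁ + (L : ℤ) - 1 → IsUnit (H n))
    (r : Fin M → ℤ → ℂ)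
    (hr1 : ∀ (m : Fin M) (n : ℤ), N₁ ≤ n → n ≤ N₁ + (L : ℤ) - 1 →
      ∀ k : Fin M, r m (n + (k : ℤ) * (L : ℤ)) = (H n)⁻¹ m k)
    (hr0 : ∀ (m : Fin M) (n : ℤ), n < N₁ ∨ N₂ < n → r m n = 0) :
    (∀ n ∈ Finset.Icc N₁ N₂, ∑ m : Fin M, r m n * b m n = 1) ∧
    (∀ n₁ ∈ Finset.Icc N₁ N₂, ∀ n₂ ∈ Finset.Icc N₁ N₂,
      (∃ j : ℤ, j ≠ 0 ∧ n₁ - n₂ = j * (L : ℤ)) →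
      ∑ m : Fin M, r m n₁ * b m n₂ = 0) := by
  have hL' : (0:ℤ) < (L:ℤ) := by exact_mod_cast hL
  -- decomposition of every n ∈ I^N
  have decomp : ∀ n : ℤ, N₁ ≤ n → n ≤ N₂ →
      ∃ (n₀ : ℤ) (k : Fin M), N₁ ≤ n₀ ∧ n₀ ≤ N₁ + (L:ℤ) - 1 ∧
        n = n₀ + (k : ℤ) * (L:ℤ) := by
    intro n hn1 hn2
    set d := n - N₁ with hd
    have hd0 : 0 ≤ d := by omega
    have hdlt : d < (L:ℤ) * (M:ℤ) := by omega
    have hq0 : 0 ≤ d / (L:ℤ) := Int.ediv_nonneg hd0 (le_of_lt hL')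
    have hqlt : d / (L:ℤ) < (M:ℤ) := by
      rw [Int.ediv_lt_iff_lt_mul hL']
      calc d < (L:ℤ) * (M:ℤ) := hdlt
        _ = (M:ℤ) * (L:ℤ) := mul_comm _ _
    have htn : ((d / (L:ℤ)).toNat : ℤ) = d / (L:ℤ) := Int.toNat_of_nonneg hq0
    have hklt : (d / (L:ℤ)).toNat < M := by omega
    refine ⟨N₁ + d % (L:ℤ), ⟨(d / (L:ℤ)).toNat, hklt⟩, ?_, ?_, ?_⟩
    · have := Int.emod_nonneg d (ne_of_gt hL'); omega
    · have := Int.emod_lt_of_pos d hL'; omega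
    · have h1 : (L:ℤ) * (d / (L:ℤ)) + d % (L:ℤ) = d := Int.mul_ediv_add_emod d (L:ℤ)
      simp only [Fin.val_mk]
      rw [htn, mul_comm]
      linarith
  -- key biorthogonality computation
  have key : ∀ n₀ : ℤ, N₁ ≤ n₀ → n₀ ≤ N₁ + (L:ℤ) - 1 → ∀ k₁ k₂ : Fin M,
      ∑ m : Fin M, r m (n₀ + (k₁:ℤ) * (L:ℤ)) * b m (n₀ + (k₂:ℤ) * (L:ℤ)) =
        if k₂ = k₁ then 1 else 0 := by
    intro n₀ h1 h2 k₁ k₂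
    have hu := hinv n₀ h1 h2
    have hmul : H n₀ * (H n₀)⁻¹ = 1 :=
      Matrix.mul_nonsing_inv _ ((Matrix.isUnit_iff_isUnit_det _).mp hu)
    have hb : ∀ m : Fin M, b m (n₀ + (k₂:ℤ) * (L:ℤ)) = H n₀ k₂ m := by
      intro m; rw [hH]; rfl
    have hsum : ∑ m : Fin M, r m (n₀ + (k₁:ℤ) * (L:ℤ)) * b m (n₀ + (k₂:ℤ) * (L:ℤ))
        = (H n₀ * (H n₀)⁻¹) k₂ k₁ := by
      rw [Matrix.mul_apply]
      refine Finset.sum_congr rfl fun m _ => ?_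
      rw [hr1 m n₀ h1 h2 k₁, hb m]; ring
    rw [hsum, hmul, Matrix.one_apply]
  constructor
  · intro n hn
    rw [Finset.mem_Icc] at hn
    obtain ⟨n₀, k, h1, h2, heq⟩ := decomp n hn.1 hn.2
    rw [heq, key n₀ h1 h2 k k, if_pos rfl]
  · intro n₁ hn₁ n₂ hn₂ ⟨j, hj0, hj⟩
    rw [Finset.mem_Icc] at hn₁ hn₂
    obtain ⟨n₀, k₁, h1, h2, heq₁⟩ := decomp n₁ hn₁.1 hn₁.2
    obtain ⟨n₀', k₂, h1', h2', heq₂⟩ := decomp n₂ hn₂.1 hn₂.2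
    set c : ℤ := j + (k₂:ℤ) - (k₁:ℤ) with hc_def
    have hc : n₀ - n₀' = c * (L:ℤ) := by
      have : (n₀ + (k₁:ℤ) * (L:ℤ)) - (n₀' + (k₂:ℤ) * (L:ℤ)) = j * (L:ℤ) := by
        rw [← heq₁, ← heq₂]; exact hj
      linear_combination this
    have hc0 : c = 0 := by
      by_contra h
      rcases lt_or_gt_of_ne h with h'|h'
      · have h1c : c ≤ -1 := by omega
        nlinarith
      · have h1c : 1 ≤ c := by omega
        nlinarith
    have hn0 : n₀ = n₀' := by
      rw [hc0, zero_mul] at hc; omega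
    have hjval : j = (k₁:ℤ) - (k₂:ℤ) := by omega
    have hkne : k₂ ≠ k₁ := by
      intro hk
      apply hj0
      rw [hjval, hk, sub_self]
    rw [heq₁, heq₂, ← hn0, key n₀ h1 h2 k₁ k₂, if_neg hkne]
end
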